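/- arXiv:1508.03218 — 7 statements merged into one kernel-verified Lean document; each statement's English description precedes it below -/
import Mathlib

section
/- Let N ≥ 2 be an integer. For k = 1,…,N set g_{k,1} := ((k−1)N, 0, 0) and g_{k,2} := (0, (k−1)/N, log N) in ℝ³. Then the 2N sets g_{k,1}*S_N and g_{k,2}*S_N (where translation is by SOL multiplication) are pairwise disjoint and their union is S_{N²} = [0,N²) × [0,1) × [0, 2·log N). Explicitly, g_{k,1}*S_N = [(k−1)N, kN) × [0,1) × [0, log N) and g_{k,2}*S_N = [0,N²) × [(k−1)/N, k/N) × [log N, 2·log N). -/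
/-!
STATEMENT 3: tiling of S_{N²} by 2N SOL-translates of S_N.
-/

/-- SOL multiplication on ℝ³. -/
noncomputable def solMul (g h : ℝ × ℝ × ℝ) : ℝ × ℝ × ℝ :=
  (g.1 + Real.exp g.2.2 * h.1, g.2.1 + Real.exp (-g.2.2) * h.2.1, g.2.2 + h.2.2)

/-- The box S_N = [0,N) × [0,1) × [0, log N). -/
noncomputable def solS (N : ℝ) : Set (ℝ × ℝ × ℝ) :=
  Set.Ico 0 N ×ˢ Set.Ico (0 : ℝ) 1 ×ˢ Set.Ico 0 (Real.log N)

/-- The translate tiles: `solT N k 0 = g_{k,1} * S_N` with g_{k,1} = ((k−1)N, 0, 0), and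
`solT N k 1 = g_{k,2} * S_N` with g_{k,2} = (0, (k−1)/N, log N). -/
noncomputable def solT (N : ℕ) (k : ℕ) (i : Fin 2) : Set (ℝ × ℝ × ℝ) :=
  if i = 0 then solMul (((k : ℝ) - 1) * N, 0, 0) '' solS N
  else solMul (0, ((k : ℝ) - 1) / N, Real.log N) '' solS N

lemma solT0 (N k : ℕ) (hN : 2 ≤ N) :
    solT N k 0 = Set.Ico (((k : ℝ) - 1) * N) ((k : ℝ) * N) ×ˢ Set.Ico (0 : ℝ) 1 ×ˢ
        Set.Ico 0 (Real.log N) := by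
  have hNpos : (0 : ℝ) < N := by positivity
  ext ⟨x, y, t⟩
  simp only [solT, if_true, eq_self_iff_true, solMul, solS, Set.mem_image, Set.mem_prod,
    Set.mem_Ico, Prod.mk.injEq, Prod.exists, Real.exp_zero, neg_zero, one_mul, zero_add]
  constructor
  · rintro ⟨a, b, c, ⟨⟨ha0, ha1⟩, ⟨hb0, hb1⟩, hc0, hc1⟩, hx, hy, ht⟩
    subst hx hy ht
    exact ⟨⟨by linarith, by nlinarith⟩, ⟨hb0, hb1⟩, hc0, hc1⟩
  · rintro ⟨⟨hx0, hx1⟩, ⟨hy0, hy1⟩, ht0, ht1⟩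
    exact ⟨x - ((k : ℝ) - 1) * N, y, t, ⟨⟨by linarith, by nlinarith⟩, ⟨hy0, hy1⟩, ht0, ht1⟩,
      by ring, rfl, rfl⟩

lemma solT1 (N k : ℕ) (hN : 2 ≤ N) :
    solT N k 1 = Set.Ico (0 : ℝ) ((N : ℝ) ^ 2) ×ˢ
        Set.Ico (((k : ℝ) - 1) / N) ((k : ℝ) / N) ×ˢ
        Set.Ico (Real.log N) (2 * Real.log N) := by
  have hNpos : (0 : ℝ) < N := by positivity
  have hexp : Real.exp (Real.log N) = N := Real.exp_log hNpos
  have hexp' : Real.exp (-Real.log N) = (N : ℝ)⁻¹ := by rw [Real.exp_neg, hexp]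
  have hdiff : (k:ℝ)/N - ((k:ℝ)-1)/N = (N:ℝ)⁻¹ := by field_simp; ring
  have h10 : (1 : Fin 2) ≠ 0 := by decide
  ext ⟨x, y, t⟩
  simp only [solT, if_neg h10, solMul, solS, Set.mem_image, Set.mem_prod, Set.mem_Ico,
    Prod.mk.injEq, Prod.exists, hexp, hexp', zero_add]
  constructor
  · rintro ⟨a, b, c, ⟨⟨ha0, ha1⟩, ⟨hb0, hb1⟩, hc0, hc1⟩, hx, hy, ht⟩
    subst hx hy ht
    have h1 : (0:ℝ) ≤ (N:ℝ)⁻¹ * b := by positivity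
    have h2 : (N:ℝ)⁻¹ * b < (N:ℝ)⁻¹ * 1 := by
      exact mul_lt_mul_of_pos_left hb1 (by positivity)
    refine ⟨⟨by positivity, by nlinarith⟩, ⟨by linarith, by linarith [hdiff]⟩,
      by linarith, by linarith⟩
  · rintro ⟨⟨hx0, hx1⟩, ⟨hy0, hy1⟩, ht0, ht1⟩
    have hinv : (0:ℝ) < (N:ℝ)⁻¹ := by positivity
    refine ⟨x / N, (y - ((k : ℝ) - 1) / N) * N, t - Real.log N,
      ⟨⟨by positivity, ?_⟩, ⟨?_, ?_⟩, by linarith, by linarith⟩, ?_, ?_, by ring⟩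
    · rw [div_lt_iff₀ hNpos]; nlinarith
    · nlinarith [sub_nonneg.mpr hy0]
    · have h3 : y - ((k : ℝ) - 1) / N < (N:ℝ)⁻¹ := by linarith
      calc (y - ((k : ℝ) - 1) / N) * N < (N:ℝ)⁻¹ * N := by nlinarith
        _ = 1 := by field_simp
    · field_simp
    · field_simp; ring


theorem sol_tiling_of_S_Nsq (N : ℕ) (hN : 2 ≤ N) :
    -- explicit description of the first-layer tiles
    (∀ k ∈ Finset.Icc 1 N,
      solT N k 0 = Set.Ico (((k : ℝ) - 1) * N) ((k : ℝ) * N) ×ˢ Set.Ico (0 : ℝ) 1 ×ˢ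
        Set.Ico 0 (Real.log N)) ∧
    -- explicit description of the second-layer tiles
    (∀ k ∈ Finset.Icc 1 N,
      solT N k 1 = Set.Ico (0 : ℝ) ((N : ℝ) ^ 2) ×ˢ
        Set.Ico (((k : ℝ) - 1) / N) ((k : ℝ) / N) ×ˢ
        Set.Ico (Real.log N) (2 * Real.log N)) ∧
    -- the 2N tiles are pairwise disjoint
    (∀ k ∈ Finset.Icc 1 N, ∀ k' ∈ Finset.Icc 1 N, ∀ i i' : Fin 2,
      (k, i) ≠ (k', i') → Disjoint (solT N k i) (solT N k' i')) ∧
    -- and their union is S_{N²} = [0,N²) × [0,1) × [0, 2 log N)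
    (⋃ k ∈ Finset.Icc 1 N, solT N k 0 ∪ solT N k 1) =
      Set.Ico (0 : ℝ) ((N : ℝ) ^ 2) ×ˢ Set.Ico (0 : ℝ) 1 ×ˢ Set.Ico 0 (2 * Real.log N) := by
  have hNpos : (0 : ℝ) < N := by positivity
  have hN1 : (1 : ℝ) < N := by exact_mod_cast Nat.lt_of_lt_of_le one_lt_two hN
  have hlog : (0 : ℝ) < Real.log N := Real.log_pos hN1
  refine ⟨fun k _ => solT0 N k hN, fun k _ => solT1 N k hN, ?_, ?_⟩
  · -- disjointness
    intro k hk k' hk' i i' hne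
    fin_cases i <;> fin_cases i'
    · -- 0, 0
      have hkk' : k ≠ k' := by simpa using hne
      show Disjoint (solT N k 0) (solT N k' 0)
      rw [solT0 N k hN, solT0 N k' hN, Set.disjoint_left]
      rintro ⟨x, y, t⟩ ⟨⟨h1, h2⟩, -, -⟩ ⟨⟨h3, h4⟩, -, -⟩
      rcases hkk'.lt_or_gt with h | h
      · have hh : (k : ℝ) ≤ (k' : ℝ) - 1 := by
          have : (k : ℝ) + 1 ≤ k' := by exact_mod_cast h
          linarith
        nlinarith
      · have hh : (k' : ℝ) ≤ (k : ℝ) - 1 := by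
          have : (k' : ℝ) + 1 ≤ k := by exact_mod_cast h
          linarith
        nlinarith
    · -- 0, 1 : t-ranges disjoint
      show Disjoint (solT N k 0) (solT N k' 1)
      rw [solT0 N k hN, solT1 N k' hN, Set.disjoint_left]
      rintro ⟨x, y, t⟩ ⟨-, -, -, h2⟩ ⟨-, -, h3, -⟩
      simp only at h2 h3
      linarith
    · show Disjoint (solT N k 1) (solT N k' 0)
      rw [solT1 N k hN, solT0 N k' hN, Set.disjoint_left]
      rintro ⟨x, y, t⟩ ⟨-, -, h2, -⟩ ⟨-, -, -, h3⟩
      simp only at h2 h3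
      linarith
    · -- 1, 1 : y-ranges disjoint
      have hkk' : k ≠ k' := by simpa using hne
      show Disjoint (solT N k 1) (solT N k' 1)
      rw [solT1 N k hN, solT1 N k' hN, Set.disjoint_left]
      rintro ⟨x, y, t⟩ ⟨-, ⟨h1, h2⟩, -⟩ ⟨-, ⟨h3, h4⟩, -⟩
      rcases hkk'.lt_or_gt with h | h
      · have hh : (k : ℝ) ≤ (k' : ℝ) - 1 := by
          have : (k : ℝ) + 1 ≤ k' := by exact_mod_cast h
          linarith
        have h5 : (k : ℝ) / N ≤ ((k' : ℝ) - 1) / N := by gcongr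
        linarith
      · have hh : (k' : ℝ) ≤ (k : ℝ) - 1 := by
          have : (k' : ℝ) + 1 ≤ k := by exact_mod_cast h
          linarith
        have h5 : (k' : ℝ) / N ≤ ((k : ℝ) - 1) / N := by gcongr
        linarith
  · -- union
    ext ⟨x, y, t⟩
    simp only [Set.mem_iUnion, Set.mem_union, Set.mem_prod, Set.mem_Ico, Finset.mem_Icc,
      exists_prop]
    constructor
    · rintro ⟨k, ⟨hk1, hkN⟩, h | h⟩
      · rw [solT0 N k hN] at h
        obtain ⟨⟨h1, h2⟩, ⟨h3, h4⟩, h5, h6⟩ := h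
        have hk1' : (1 : ℝ) ≤ k := by exact_mod_cast hk1
        have hkN' : (k : ℝ) ≤ N := by exact_mod_cast hkN
        refine ⟨⟨by nlinarith, by nlinarith⟩, ⟨h3, h4⟩, h5, by linarith⟩
      · rw [solT1 N k hN] at h
        obtain ⟨⟨h1, h2⟩, ⟨h3, h4⟩, h5, h6⟩ := h
        have hk1' : (1 : ℝ) ≤ k := by exact_mod_cast hk1
        have hkN' : (k : ℝ) ≤ N := by exact_mod_cast hkN
        have hy0 : (0 : ℝ) ≤ ((k : ℝ) - 1) / N := div_nonneg (by linarith) hNpos.le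
        have hy1 : (k : ℝ) / N ≤ 1 := by
          rw [div_le_one hNpos]; exact hkN'
        exact ⟨⟨h1, h2⟩, ⟨by linarith, by linarith⟩, by linarith, h6⟩
    · rintro ⟨⟨hx0, hx1⟩, ⟨hy0, hy1⟩, ht0, ht1⟩
      rcases lt_or_ge t (Real.log N) with ht | ht
      · -- first layer, k from floor of x/N
        set m : ℤ := ⌊x / N⌋ with hm
        have hm0 : 0 ≤ m := Int.floor_nonneg.mpr (by positivity)
        have hmlt : m < N := by
          rw [hm, Int.floor_lt]
          push_cast
          rw [div_lt_iff₀ hNpos]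
          nlinarith
        refine ⟨m.toNat + 1, ⟨by omega, by omega⟩, Or.inl ?_⟩
        rw [solT0 N (m.toNat + 1) hN]
        have key : ((m.toNat : ℕ) : ℝ) = (m : ℝ) := by exact_mod_cast Int.toNat_of_nonneg hm0
        have hmc : ((m.toNat + 1 : ℕ) : ℝ) - 1 = (m : ℝ) := by push_cast; rw [key]; ring
        have hfl : (m : ℝ) ≤ x / N := Int.floor_le _
        have hfu : x / N < (m : ℝ) + 1 := Int.lt_floor_add_one _
        refine ⟨⟨?_, ?_⟩, ⟨hy0, hy1⟩, ht0, ht⟩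
        · rw [hmc]
          calc (m : ℝ) * N ≤ (x / N) * N := by nlinarith
            _ = x := by field_simp
        · have h9 : ((m.toNat + 1 : ℕ) : ℝ) = (m : ℝ) + 1 := by push_cast; rw [key]
          rw [h9]
          calc x = (x / N) * N := by field_simp
            _ < ((m : ℝ) + 1) * N := by nlinarith
      · -- second layer, k from floor of y*N
        set m : ℤ := ⌊y * N⌋ with hm
        have hm0 : 0 ≤ m := Int.floor_nonneg.mpr (by positivity)
        have hmlt : m < N := by
          rw [hm, Int.floor_lt]
          push_cast
          nlinarith
        refine ⟨m.toNat + 1, ⟨by omega, by omega⟩, Or.inr ?_⟩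
        rw [solT1 N (m.toNat + 1) hN]
        have key : ((m.toNat : ℕ) : ℝ) = (m : ℝ) := by exact_mod_cast Int.toNat_of_nonneg hm0
        have hmc : ((m.toNat + 1 : ℕ) : ℝ) - 1 = (m : ℝ) := by push_cast; rw [key]; ring
        have hfl : (m : ℝ) ≤ y * N := Int.floor_le _
        have hfu : y * N < (m : ℝ) + 1 := Int.lt_floor_add_one _
        refine ⟨⟨hx0, hx1⟩, ⟨?_, ?_⟩, ht, ht1⟩
        · rw [hmc, div_le_iff₀ hNpos]; linarith
        · have h9 : ((m.toNat + 1 : ℕ) : ℝ) = (m : ℝ) + 1 := by push_cast; rw [key]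
          rw [h9, lt_div_iff₀ hNpos]; linarith
end

section
/- Let N ≥ 2 be an integer and m ≥ 0 an integer. Then there exists a finite set T ⊆ ℝ³ of cardinality 2^m · N^{2^m − 1} such that the SOL-translates g*S_N for g ∈ T are pairwise disjoint and their union is S_{N^{2^m}} = [0, N^{2^m}) × [0,1) × [0, 2^m·log N). -/
open Set

lemma grid_mem {c : ℝ} (hc : 0 < c) {n : ℕ} {x : ℝ} :
    x ∈ Ico (0:ℝ) (n*c) ↔ ∃ i : ℕ, i < n ∧ x ∈ Ico ((i:ℝ)*c) (((i:ℝ)+1)*c) := by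
  constructor
  · rintro ⟨h0, hn⟩
    refine ⟨⌊x/c⌋₊, ?_, ?_, ?_⟩
    · have h1 : (⌊x/c⌋₊ : ℝ) ≤ x / c := Nat.floor_le (div_nonneg h0 hc.le)
      have hle : (⌊x/c⌋₊ : ℝ) * c ≤ x := by
        calc (⌊x/c⌋₊ : ℝ) * c ≤ (x/c) * c := mul_le_mul_of_nonneg_right h1 hc.le
          _ = x := div_mul_cancel₀ x hc.ne'
      have hlt : (⌊x/c⌋₊ : ℝ) * c < (n:ℝ) * c := lt_of_le_of_lt hle hn
      exact_mod_cast lt_of_mul_lt_mul_right hlt hc.le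
    · have h1 : (⌊x/c⌋₊ : ℝ) ≤ x / c := Nat.floor_le (div_nonneg h0 hc.le)
      calc (⌊x/c⌋₊ : ℝ) * c ≤ (x/c) * c := mul_le_mul_of_nonneg_right h1 hc.le
        _ = x := div_mul_cancel₀ x hc.ne'
    · have h2 : x / c < ⌊x/c⌋₊ + 1 := Nat.lt_floor_add_one _
      calc x = (x/c) * c := (div_mul_cancel₀ x hc.ne').symm
        _ < ((⌊x/c⌋₊ : ℝ) + 1) * c := mul_lt_mul_of_pos_right h2 hc
  · rintro ⟨i, hin, h1, h2⟩
    constructor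
    · exact le_trans (by positivity) h1
    · refine lt_of_lt_of_le h2 ?_
      have : (i:ℝ) + 1 ≤ (n:ℝ) := by exact_mod_cast hin
      exact mul_le_mul_of_nonneg_right this hc.le

lemma grid_disj {c : ℝ} (hc : 0 < c) {i j : ℕ} (h : i ≠ j) :
    Disjoint (Ico ((i:ℝ)*c) (((i:ℝ)+1)*c)) (Ico ((j:ℝ)*c) (((j:ℝ)+1)*c)) := by
  rcases h.lt_or_gt with hij | hij
  · apply Set.Ico_disjoint_Ico.mpr
    have : (i:ℝ) + 1 ≤ (j:ℝ) := by exact_mod_cast hij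
    have := mul_le_mul_of_nonneg_right this hc.le
    simp only [min_le_iff, le_max_iff]
    right; left; linarith
  · apply Set.Ico_disjoint_Ico.mpr
    have : (j:ℝ) + 1 ≤ (i:ℝ) := by exact_mod_cast hij
    have := mul_le_mul_of_nonneg_right this hc.le
    simp only [min_le_iff, le_max_iff]
    left; right; linarith

lemma solMul_image (a b t : ℝ) (N : ℝ) :
    solMul (a,b,t) '' solS N =
      Ico a (a + Real.exp t * N) ×ˢ Ico b (b + Real.exp (-t)) ×ˢ Ico t (t + Real.log N) := by
  have het : 0 < Real.exp t := Real.exp_pos t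
  have hent : 0 < Real.exp (-t) := Real.exp_pos (-t)
  ext ⟨x, y, s⟩
  simp only [solMul, solS, Set.mem_image, Set.mem_prod, Set.mem_Ico, Prod.exists,
    Prod.mk.injEq]
  constructor
  · rintro ⟨u, v, w, ⟨⟨hu0, huN⟩, ⟨hv0, hv1⟩, ⟨hw0, hwL⟩⟩, hx, hy, hs⟩
    subst hx hy hs
    refine ⟨⟨by nlinarith, by nlinarith⟩, ⟨by nlinarith, by nlinarith⟩, by constructor <;> linarith⟩
  · rintro ⟨⟨hx1, hx2⟩, ⟨hy1, hy2⟩, ⟨hs1, hs2⟩⟩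
    refine ⟨(x - a) / Real.exp t, (y - b) / Real.exp (-t), s - t,
      ⟨⟨?_, ?_⟩, ⟨?_, ?_⟩, ⟨by linarith, by linarith⟩⟩, ?_, ?_, by ring⟩
    · exact div_nonneg (by linarith) het.le
    · rw [div_lt_iff₀ het]; nlinarith
    · exact div_nonneg (by linarith) hent.le
    · rw [div_lt_one hent]; linarith
    · field_simp; ring
    · field_simp; ring

/-- The translate for slab k, cell (i,j). -/
noncomputable def solG (N k i j : ℕ) : ℝ × ℝ × ℝ :=
  ((i:ℝ) * (N:ℝ)^(k+1), (j:ℝ) * ((N:ℝ)^k)⁻¹, (k:ℝ) * Real.log N)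

lemma solG_image {N : ℕ} (hN : 2 ≤ N) (k i j : ℕ) :
    solMul (solG N k i j) '' solS N =
      Ico ((i:ℝ) * (N:ℝ)^(k+1)) (((i:ℝ)+1) * (N:ℝ)^(k+1)) ×ˢ
      Ico ((j:ℝ) * ((N:ℝ)^k)⁻¹) (((j:ℝ)+1) * ((N:ℝ)^k)⁻¹) ×ˢ
      Ico ((k:ℝ) * Real.log N) (((k:ℝ)+1) * Real.log N) := by
  have hN0 : (0:ℝ) < N := by positivity
  have hexp : Real.exp ((k:ℝ) * Real.log N) = (N:ℝ)^k := by
    rw [Real.exp_nat_mul, Real.exp_log hN0]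
  have e1 : (i:ℝ)*(N:ℝ)^(k+1) + (N:ℝ)^k * N = ((i:ℝ)+1)*(N:ℝ)^(k+1) := by
    rw [pow_succ]; ring
  have e2 : (j:ℝ)*((N:ℝ)^k)⁻¹ + ((N:ℝ)^k)⁻¹ = ((j:ℝ)+1)*((N:ℝ)^k)⁻¹ := by ring
  have e3 : (k:ℝ)*Real.log N + Real.log N = ((k:ℝ)+1)*Real.log N := by ring
  rw [solG, solMul_image, hexp, Real.exp_neg, hexp, e1, e2, e3]

theorem sol_tiling_iterated (N : ℕ) (hN : 2 ≤ N) (m : ℕ) :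
    ∃ T : Finset (ℝ × ℝ × ℝ),
      T.card = 2 ^ m * N ^ (2 ^ m - 1) ∧
      (↑T : Set (ℝ × ℝ × ℝ)).PairwiseDisjoint (fun g => solMul g '' solS N) ∧
      (⋃ g ∈ T, solMul g '' solS N) =
        Set.Ico (0 : ℝ) ((N : ℝ) ^ (2 ^ m)) ×ˢ Set.Ico (0 : ℝ) 1 ×ˢ
          Set.Ico 0 ((2 ^ m : ℝ) * Real.log N) := by
  have hN0 : (0:ℝ) < N := by positivity
  have hN1 : (1:ℝ) < N := by exact_mod_cast hN
  have hL : 0 < Real.log N := Real.log_pos hN1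
  set K := 2^m with hK
  set L := Real.log N with hLdef
  -- index set
  set I : Finset ((_ : ℕ) × ℕ × ℕ) :=
    (Finset.range K).sigma (fun k => Finset.range (N^(K - (k+1))) ×ˢ Finset.range (N^k)) with hI
  set F : (Σ _ : ℕ, ℕ × ℕ) → ℝ × ℝ × ℝ := fun p => solG N p.1 p.2.1 p.2.2 with hF
  have hX : ∀ k : ℕ, (0:ℝ) < (N:ℝ)^(k+1) := fun k => by positivity
  have hY : ∀ k : ℕ, (0:ℝ) < ((N:ℝ)^k)⁻¹ := fun k => by positivity
  have hFinj : Function.Injective F := by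
    rintro ⟨k, i, j⟩ ⟨k', i', j'⟩ h
    simp only [hF, solG, Prod.mk.injEq] at h
    obtain ⟨h1, h2, h3⟩ := h
    have hk : k = k' := by
      have := mul_right_cancel₀ hL.ne' h3
      exact_mod_cast this
    subst hk
    have hi : i = i' := by
      have := mul_right_cancel₀ (hX k).ne' h1
      exact_mod_cast this
    have hj : j = j' := by
      have := mul_right_cancel₀ (hY k).ne' h2
      exact_mod_cast this
    subst hi; subst hj; rfl
  refine ⟨I.image F, ?_, ?_, ?_⟩
  · rw [Finset.card_image_of_injective _ hFinj, Finset.card_sigma]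
    have : ∀ k ∈ Finset.range K,
        (Finset.range (N^(K - (k+1))) ×ˢ Finset.range (N^k)).card = N^(K-1) := by
      intro k hk
      rw [Finset.mem_range] at hk
      rw [Finset.card_product, Finset.card_range, Finset.card_range, ← pow_add]
      congr 1
      omega
    rw [Finset.sum_congr rfl this, Finset.sum_const, Finset.card_range, smul_eq_mul]
  · -- pairwise disjoint
    intro g hg g' hg' hne
    simp only [Finset.coe_image, Set.mem_image, Finset.mem_coe] at hg hg'
    obtain ⟨⟨k, i, j⟩, hpI, rfl⟩ := hg
    obtain ⟨⟨k', i', j'⟩, hqI, rfl⟩ := hg'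
    have hpq : (⟨k, i, j⟩ : Σ _ : ℕ, ℕ × ℕ) ≠ ⟨k', i', j'⟩ := fun h => hne (by rw [h])
    show Disjoint (solMul (F ⟨k,i,j⟩) '' solS N) (solMul (F ⟨k',i',j'⟩) '' solS N)
    simp only [hF]
    rw [solG_image hN, solG_image hN]
    rw [Set.disjoint_left]
    rintro ⟨x, y, s⟩ ⟨hx, hy, hs⟩ ⟨hx', hy', hs'⟩
    by_cases hkk : k = k'
    · subst hkk
      by_cases hii : i = i'
      · subst hii
        by_cases hjj : j = j'
        · subst hjj; exact hpq rfl
        · exact Set.disjoint_left.mp (grid_disj (hY k) hjj) hy hy'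
      · exact Set.disjoint_left.mp (grid_disj (hX k) hii) hx hx'
    · exact Set.disjoint_left.mp (grid_disj hL hkk) hs hs'
  · -- union
    have hbx : ∀ k : ℕ, k < K → ((N^(K-(k+1)) : ℕ) : ℝ) * (N:ℝ)^(k+1) = (N:ℝ)^K := by
      intro k hk
      push_cast
      rw [← pow_add]
      congr 1
      omega
    have hby : ∀ k : ℕ, ((N^k : ℕ) : ℝ) * ((N:ℝ)^k)⁻¹ = 1 := by
      intro k
      push_cast
      exact mul_inv_cancel₀ (by positivity)
    have hbt : ((K : ℕ) : ℝ) * L = (2^m : ℝ) * L := by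
      rw [hK]; push_cast; ring
    ext ⟨x, y, s⟩
    constructor
    · intro h
      rw [Set.mem_iUnion₂] at h
      obtain ⟨g, hg, hmem⟩ := h
      rw [Finset.mem_image] at hg
      obtain ⟨⟨k, i, j⟩, hpI, rfl⟩ := hg
      rw [hI, Finset.mem_sigma, Finset.mem_product, Finset.mem_range,
        Finset.mem_range, Finset.mem_range] at hpI
      obtain ⟨hk, hi, hj⟩ := hpI
      have hmem' : (x, y, s) ∈ solMul (solG N k i j) '' solS N := hmem
      rw [solG_image hN] at hmem'
      obtain ⟨hx, hy, hs⟩ := hmem'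
      refine ⟨?_, ?_, ?_⟩
      · have := (grid_mem (hX k) (n := N^(K-(k+1)))).mpr ⟨i, hi, hx⟩
        rwa [hbx k hk] at this
      · have := (grid_mem (hY k) (n := N^k)).mpr ⟨j, hj, hy⟩
        rwa [hby k] at this
      · have := (grid_mem hL (n := K)).mpr ⟨k, hk, hs⟩
        rwa [hbt] at this
    · rintro ⟨hx, hy, hs⟩
      rw [← hbt] at hs
      obtain ⟨k, hk, hsk⟩ := (grid_mem hL).mp hs
      rw [← hbx k hk] at hx
      obtain ⟨i, hi, hxi⟩ := (grid_mem (hX k)).mp hx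
      rw [← hby k] at hy
      obtain ⟨j, hj, hyj⟩ := (grid_mem (hY k)).mp hy
      rw [Set.mem_iUnion₂]
      refine ⟨F ⟨k, i, j⟩, ?_, ?_⟩
      · rw [Finset.mem_image]
        refine ⟨⟨k, i, j⟩, ?_, rfl⟩
        rw [hI, Finset.mem_sigma, Finset.mem_product]
        exact ⟨Finset.mem_range.mpr hk, Finset.mem_range.mpr hi, Finset.mem_range.mpr hj⟩
      · show (x, y, s) ∈ solMul (solG N k i j) '' solS N
        rw [solG_image hN]
        exact ⟨hxi, hyj, hsk⟩
end

section
/- Let M ≥ 2 be an even integer, λ > 0, and g : ℝ → ℝ. Suppose that for every i ∈ {1,…,M}, |g(iM) − g((i−1)M)| ≤ (1+λ)·|g(M²) − g(0)|/M. Then there exists k ∈ {1,…,M−1} such that both |g(kM) − g((k−1)M)| ≥ (1−λ)·|g(M²) − g(0)|/M and |g((k+1)M) − g(kM)| ≥ (1−λ)·|g(M²) − g(0)|/M. -/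
/-!
STATEMENT 8: pigeonhole lemma on stretch factors over consecutive intervals.
-/

theorem two_consecutive_intervals_stretched (M : ℕ) (hM : 2 ≤ M) (hMeven : Even M)
    (lam : ℝ) (hlam : 0 < lam) (g : ℝ → ℝ)
    (h : ∀ i : ℕ, 1 ≤ i → i ≤ M →
      |g ((i : ℝ) * M) - g (((i : ℝ) - 1) * M)| ≤
        (1 + lam) * (|g ((M : ℝ) ^ 2) - g 0| / M)) :
    ∃ k : ℕ, 1 ≤ k ∧ k ≤ M - 1 ∧
      (1 - lam) * (|g ((M : ℝ) ^ 2) - g 0| / M) ≤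
        |g ((k : ℝ) * M) - g (((k : ℝ) - 1) * M)| ∧
      (1 - lam) * (|g ((M : ℝ) ^ 2) - g 0| / M) ≤
        |g (((k : ℝ) + 1) * M) - g ((k : ℝ) * M)| := by
  by_contra hc
  push_neg at hc
  set A : ℝ := |g ((M : ℝ) ^ 2) - g 0| / M with hA
  have hMpos : (0:ℝ) < M := by positivity
  set b : ℕ → ℝ := fun i => |g (((i:ℝ) + 1) * M) - g ((i:ℝ) * M)| with hb
  -- upper bound for each interval
  have hub : ∀ i, i < M → b i ≤ (1 + lam) * A := by
    intro i hi
    have := h (i + 1) (by omega) (by omega)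
    push_cast at this
    simpa [hb, add_sub_cancel_right] using this
  -- the negated conclusion, in terms of b
  have hneg : ∀ j, j < M - 1 → (1 - lam) * A ≤ b j → b (j + 1) < (1 - lam) * A := by
    intro j hj hbig
    have := hc (j + 1) (by omega) (by omega)
    push_cast at this
    have h1 : (1 - lam) * A ≤ |g (((j:ℝ) + 1) * M) - g (((j:ℝ) + 1 - 1) * M)| := by
      simpa [hb, add_sub_cancel_right] using hbig
    have := this h1
    simpa [hb] using this
  -- telescoping lower bound
  have htel : (M:ℝ) * A ≤ ∑ i ∈ Finset.range M, b i := by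
    have hsum : ∑ i ∈ Finset.range M, (g (((i:ℝ) + 1) * M) - g ((i:ℝ) * M))
        = g ((M:ℝ) ^ 2) - g 0 := by
      have := Finset.sum_range_sub (fun i => g ((i:ℝ) * M)) M
      simp only [Nat.cast_add, Nat.cast_one] at this
      rw [this]
      norm_num [sq]
    calc (M:ℝ) * A = |g ((M : ℝ) ^ 2) - g 0| := by
          rw [hA]; field_simp [hMpos.ne']
      _ = |∑ i ∈ Finset.range M, (g (((i:ℝ) + 1) * M) - g ((i:ℝ) * M))| := by rw [hsum]
      _ ≤ ∑ i ∈ Finset.range M, b i := Finset.abs_sum_le_sum_abs _ _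
  -- pairing
  obtain ⟨m, hm⟩ := hMeven
  have hmM : M = 2 * m := by omega
  have hm1 : 1 ≤ m := by omega
  have hpair : ∀ n : ℕ, ∑ i ∈ Finset.range (2 * n), b i
      = ∑ j ∈ Finset.range n, (b (2 * j) + b (2 * j + 1)) := by
    intro n
    induction n with
    | zero => simp
    | succ n ih =>
      rw [Finset.sum_range_succ, ← ih, Nat.mul_succ, Finset.sum_range_succ,
        Finset.sum_range_succ]
      ring_nf
  have hpairlt : ∀ j ∈ Finset.range m, b (2 * j) + b (2 * j + 1) < 2 * A := by
    intro j hj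
    simp only [Finset.mem_range] at hj
    have hk1 : 2 * j < M := by omega
    have hk2 : 2 * j + 1 < M := by omega
    have hu1 := hub (2 * j) hk1
    have hu2 := hub (2 * j + 1) hk2
    rcases lt_or_ge (b (2 * j)) ((1 - lam) * A) with hs | hbig
    · have : b (2*j) + b (2*j+1) < (1 - lam) * A + (1 + lam) * A := by
        exact add_lt_add_of_lt_of_le hs hu2
      linarith
    · have hs := hneg (2 * j) (by omega) hbig
      have : b (2*j) + b (2*j+1) < (1 + lam) * A + (1 - lam) * A :=
        add_lt_add_of_le_of_lt hu1 hs
      linarith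
  have hlt : ∑ i ∈ Finset.range M, b i < (M:ℝ) * A := by
    rw [hmM, hpair m]
    calc ∑ j ∈ Finset.range m, (b (2 * j) + b (2 * j + 1))
        < ∑ _j ∈ Finset.range m, (2 * A) :=
          Finset.sum_lt_sum_of_nonempty (by simp [Finset.nonempty_range_iff]; omega) hpairlt
      _ = (m:ℝ) * (2 * A) := by simp [mul_comm]
      _ = ((2 * m : ℕ):ℝ) * A := by push_cast; ring
  linarith
end

section
/- Let f : ℝ → ℝ, let M₀ be a positive integer and λ > 0. Suppose that for every integer M ≥ M₀ and every integer c ≥ 0 there exists i ∈ {1,…,M} such that |f(cM² + (i−1)M) − f(cM² + iM)|/M > (1+λ)·|f(cM²) − f((c+1)M²)|/M². Then f is not biLipschitz: for every L ≥ 1 there exist x, y ∈ ℝ violating L⁻¹·|x−y| ≤ |f(x)−f(y)| ≤ L·|x−y|. -/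
/-!
STATEMENT 9: if at every scale M ≥ M₀ and over every aligned window [cM², (c+1)M²] some
subinterval of length M is stretched by more than (1+λ) times the average, then f is not
biLipschitz.
-/

theorem not_biLipschitz_of_stretched_at_all_scales
    (f : ℝ → ℝ) (M₀ : ℕ) (hM₀ : 1 ≤ M₀) (lam : ℝ) (hlam : 0 < lam)
    (h : ∀ M : ℕ, M₀ ≤ M → ∀ c : ℕ, ∃ i : ℕ, 1 ≤ i ∧ i ≤ M ∧
      |f ((c : ℝ) * (M : ℝ) ^ 2 + ((i : ℝ) - 1) * M) -
          f ((c : ℝ) * (M : ℝ) ^ 2 + (i : ℝ) * M)| / M >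
        (1 + lam) *
          (|f ((c : ℝ) * (M : ℝ) ^ 2) - f (((c : ℝ) + 1) * (M : ℝ) ^ 2)| / (M : ℝ) ^ 2)) :
    ∀ L : ℝ, 1 ≤ L → ∃ x y : ℝ,
      ¬ (L⁻¹ * |x - y| ≤ |f x - f y| ∧ |f x - f y| ≤ L * |x - y|) := by
  intro L hL
  by_contra hcon
  push_neg at hcon
  -- reformulate h in terms of aligned windows of length M vs length M*M
  have h' : ∀ M : ℕ, M₀ ≤ M → ∀ c : ℕ, ∃ d : ℕ,
      |f ((d : ℝ) * M) - f (((d : ℝ) + 1) * M)| / M >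
        (1 + lam) *
          (|f ((c : ℝ) * ((M * M : ℕ) : ℝ)) - f (((c : ℝ) + 1) * ((M * M : ℕ) : ℝ))| /
            ((M * M : ℕ) : ℝ)) := by
    intro M hM c
    obtain ⟨i, hi1, hi2, hst⟩ := h M hM c
    obtain ⟨j, rfl⟩ : ∃ j, i = j + 1 := ⟨i - 1, by omega⟩
    refine ⟨c * M + j, ?_⟩
    have e1 : ((c * M + j : ℕ) : ℝ) * (M : ℝ)
        = (c : ℝ) * (M : ℝ) ^ 2 + (((j + 1 : ℕ) : ℝ) - 1) * M := by push_cast; ring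
    have e2 : (((c * M + j : ℕ) : ℝ) + 1) * (M : ℝ)
        = (c : ℝ) * (M : ℝ) ^ 2 + ((j + 1 : ℕ) : ℝ) * M := by push_cast; ring
    have e3 : (c : ℝ) * ((M * M : ℕ) : ℝ) = (c : ℝ) * (M : ℝ) ^ 2 := by push_cast; ring
    have e4 : ((c : ℝ) + 1) * ((M * M : ℕ) : ℝ) = ((c : ℝ) + 1) * (M : ℝ) ^ 2 := by
      push_cast; ring
    have e5 : ((M * M : ℕ) : ℝ) = (M : ℝ) ^ 2 := by push_cast; ring
    rw [e1, e2, e3, e4, e5]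
    exact hst
  -- iterate over scales M₀ ^ (2 ^ k)
  have key : ∀ k : ℕ, ∀ c : ℕ, ∃ d : ℕ,
      |f ((d : ℝ) * M₀) - f (((d : ℝ) + 1) * M₀)| / M₀ >
        (1 + lam) ^ (k + 1) *
          (|f ((c : ℝ) * ((M₀ ^ 2 ^ k * M₀ ^ 2 ^ k : ℕ) : ℝ)) -
              f (((c : ℝ) + 1) * ((M₀ ^ 2 ^ k * M₀ ^ 2 ^ k : ℕ) : ℝ))| /
            ((M₀ ^ 2 ^ k * M₀ ^ 2 ^ k : ℕ) : ℝ)) := by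
    intro k
    induction k with
    | zero =>
      intro c
      simpa using h' M₀ le_rfl c
    | succ k ih =>
      intro c
      have hMk : M₀ ≤ M₀ ^ 2 ^ (k + 1) := Nat.le_self_pow (by positivity) M₀
      obtain ⟨d₁, hd₁⟩ := h' (M₀ ^ 2 ^ (k + 1)) hMk c
      obtain ⟨d, hd⟩ := ih d₁
      refine ⟨d, ?_⟩
      have hpow : M₀ ^ 2 ^ (k + 1) = M₀ ^ 2 ^ k * M₀ ^ 2 ^ k := by
        rw [pow_succ, pow_mul, sq]
      rw [hpow] at hd₁
      have hppos : (0 : ℝ) < (1 + lam) ^ (k + 1) := by positivity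
      calc |f ((d : ℝ) * M₀) - f (((d : ℝ) + 1) * M₀)| / M₀
          > (1 + lam) ^ (k + 1) *
            (|f ((d₁ : ℝ) * ((M₀ ^ 2 ^ k * M₀ ^ 2 ^ k : ℕ) : ℝ)) -
                f (((d₁ : ℝ) + 1) * ((M₀ ^ 2 ^ k * M₀ ^ 2 ^ k : ℕ) : ℝ))| /
              ((M₀ ^ 2 ^ k * M₀ ^ 2 ^ k : ℕ) : ℝ)) := hd
        _ > (1 + lam) ^ (k + 1) * ((1 + lam) *
            (|f ((c : ℝ) * ((M₀ ^ 2 ^ k * M₀ ^ 2 ^ k * (M₀ ^ 2 ^ k * M₀ ^ 2 ^ k) : ℕ) : ℝ)) -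
                f (((c : ℝ) + 1) *
                  ((M₀ ^ 2 ^ k * M₀ ^ 2 ^ k * (M₀ ^ 2 ^ k * M₀ ^ 2 ^ k) : ℕ) : ℝ))| /
              ((M₀ ^ 2 ^ k * M₀ ^ 2 ^ k * (M₀ ^ 2 ^ k * M₀ ^ 2 ^ k) : ℕ) : ℝ))) :=
            mul_lt_mul_of_pos_left hd₁ hppos
        _ = (1 + lam) ^ (k + 1 + 1) *
            (|f ((c : ℝ) * ((M₀ ^ 2 ^ (k + 1) * M₀ ^ 2 ^ (k + 1) : ℕ) : ℝ)) -
                f (((c : ℝ) + 1) * ((M₀ ^ 2 ^ (k + 1) * M₀ ^ 2 ^ (k + 1) : ℕ) : ℝ))| /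
              ((M₀ ^ 2 ^ (k + 1) * M₀ ^ 2 ^ (k + 1) : ℕ) : ℝ)) := by
            rw [hpow]; ring
  -- choose a large enough scale
  have hone : (1 : ℝ) < 1 + lam := by linarith
  obtain ⟨n, hn⟩ := pow_unbounded_of_one_lt (L * L) hone
  obtain ⟨d, hd⟩ := key n 0
  set N : ℕ := M₀ ^ 2 ^ n * M₀ ^ 2 ^ n with hN
  have hNpos : 0 < N := by positivity
  have hNR : (0 : ℝ) < (N : ℝ) := by exact_mod_cast hNpos
  have hM₀R : (0 : ℝ) < (M₀ : ℝ) := by exact_mod_cast hM₀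
  have hLpos : (0 : ℝ) < L := by linarith
  have hinv : (0 : ℝ) < L⁻¹ := inv_pos.mpr hLpos
  -- upper bound on the small window stretch
  have hup := (hcon ((d : ℝ) * M₀) (((d : ℝ) + 1) * M₀)).2
  have habs1 : |(d : ℝ) * M₀ - ((d : ℝ) + 1) * M₀| = (M₀ : ℝ) := by
    rw [show (d : ℝ) * M₀ - ((d : ℝ) + 1) * M₀ = -(M₀ : ℝ) by ring, abs_neg,
      abs_of_pos hM₀R]
  have hS_le : |f ((d : ℝ) * M₀) - f (((d : ℝ) + 1) * M₀)| / M₀ ≤ L := by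
    rw [div_le_iff₀ hM₀R]
    rw [habs1] at hup
    exact hup
  -- lower bound on the big window stretch
  have hlo := (hcon 0 (N : ℝ)).1
  have habs2 : |(0 : ℝ) - (N : ℝ)| = (N : ℝ) := by
    rw [zero_sub, abs_neg, abs_of_pos hNR]
  have hT_ge : L⁻¹ ≤ |f 0 - f (N : ℝ)| / (N : ℝ) := by
    rw [le_div_iff₀ hNR]
    calc L⁻¹ * (N : ℝ) = L⁻¹ * |(0 : ℝ) - (N : ℝ)| := by rw [habs2]
      _ ≤ |f 0 - f (N : ℝ)| := hlo
  -- simplify key at c = 0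
  have hd' : |f ((d : ℝ) * M₀) - f (((d : ℝ) + 1) * M₀)| / M₀ >
      (1 + lam) ^ (n + 1) * (|f 0 - f (N : ℝ)| / (N : ℝ)) := by
    have e0 : ((0 : ℕ) : ℝ) * ((N : ℕ) : ℝ) = 0 := by norm_num
    have e0' : (((0 : ℕ) : ℝ) + 1) * ((N : ℕ) : ℝ) = (N : ℝ) := by norm_num
    simpa [e0, e0'] using hd
  have hA : L * L < (1 + lam) ^ (n + 1) := lt_of_lt_of_le hn
    (pow_le_pow_right₀ (le_of_lt hone) (Nat.le_succ n))
  have hA0 : (0 : ℝ) < (1 + lam) ^ (n + 1) := by positivity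
  have h1 : (1 + lam) ^ (n + 1) * L⁻¹ ≤ (1 + lam) ^ (n + 1) * (|f 0 - f (N : ℝ)| / (N : ℝ)) :=
    mul_le_mul_of_nonneg_left hT_ge (le_of_lt hA0)
  have h2 : L * L * L⁻¹ < (1 + lam) ^ (n + 1) * L⁻¹ :=
    mul_lt_mul_of_pos_right hA hinv
  have h3 : L * L * L⁻¹ = L := by field_simp
  linarith
end

section
/- Fix a, b, R > 0. For r, s > 0 with rs > 1, let B_{r,s} := [0, ar) × [0, bs) × [−log s, log r) ⊆ ℝ³. Then μ(B_{r,s}) = ab·rs·log(rs), and there exists a constant C > 0 (depending only on a, b and R) such that μ(∂_R B_{r,s}) ≤ C·rs for all r, s > 0 with rs ≥ e. -/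
open MeasureTheory
open scoped ENNReal

/-!
STATEMENT 10: volume and boundary-volume estimates for the standard Følner boxes
B_{r,s} = [0,ar) × [0,bs) × [−log s, log r) of SOL.
-/

/-- The SOL quasi-distance on ℝ³. -/
noncomputable def solQDist (p q : ℝ × ℝ × ℝ) : ℝ :=
  Real.exp (-(p.2.2 + q.2.2) / 2) * |p.1 - q.1| +
    Real.exp ((p.2.2 + q.2.2) / 2) * |p.2.1 - q.2.1| + |p.2.2 - q.2.2|

/-- The R-boundary of A ⊆ ℝ³ with respect to the SOL quasi-distance. -/
noncomputable def solBdry (R : ℝ) (A : Set (ℝ × ℝ × ℝ)) : Set (ℝ × ℝ × ℝ) :=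
  {p | (∃ q ∈ A, solQDist p q ≤ R) ∧ (∃ q ∉ A, solQDist p q ≤ R)}

/-- The box B_{r,s} = [0,ar) × [0,bs) × [−log s, log r). -/
noncomputable def solBox (a b r s : ℝ) : Set (ℝ × ℝ × ℝ) :=
  Set.Ico 0 (a * r) ×ˢ Set.Ico 0 (b * s) ×ˢ Set.Ico (-Real.log s) (Real.log r)

/-! ### Auxiliary material -/

noncomputable def solK (R : ℝ) : ℝ := R * Real.exp (2 * R)
noncomputable def solc (R : ℝ) : ℝ := R * Real.exp R

lemma vol3_IcoIcoIco (x1 x2 y1 y2 t1 t2 : ℝ) (hx : x1 ≤ x2) (hy : y1 ≤ y2) :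
    volume ((Set.Ico x1 x2) ×ˢ (Set.Ico y1 y2) ×ˢ (Set.Ico t1 t2))
      = ENNReal.ofReal ((x2 - x1) * ((y2 - y1) * (t2 - t1))) := by
  rw [Measure.volume_eq_prod, Measure.prod_prod, Measure.volume_eq_prod, Measure.prod_prod,
    Real.volume_Ico, Real.volume_Ico, Real.volume_Ico,
    ← ENNReal.ofReal_mul (sub_nonneg.mpr hy), ← ENNReal.ofReal_mul (sub_nonneg.mpr hx)]

lemma vol3_IooIooIco (x1 x2 y1 y2 t1 t2 : ℝ) (hx : x1 ≤ x2) (hy : y1 ≤ y2) :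
    volume ((Set.Ioo x1 x2) ×ˢ (Set.Ioo y1 y2) ×ˢ (Set.Ico t1 t2))
      = ENNReal.ofReal ((x2 - x1) * ((y2 - y1) * (t2 - t1))) := by
  rw [Measure.volume_eq_prod, Measure.prod_prod, Measure.volume_eq_prod, Measure.prod_prod,
    Real.volume_Ioo, Real.volume_Ioo, Real.volume_Ico,
    ← ENNReal.ofReal_mul (sub_nonneg.mpr hy), ← ENNReal.ofReal_mul (sub_nonneg.mpr hx)]

lemma vol3_IooIooIoc (x1 x2 y1 y2 t1 t2 : ℝ) (hx : x1 ≤ x2) (hy : y1 ≤ y2) :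
    volume ((Set.Ioo x1 x2) ×ˢ (Set.Ioo y1 y2) ×ˢ (Set.Ioc t1 t2))
      = ENNReal.ofReal ((x2 - x1) * ((y2 - y1) * (t2 - t1))) := by
  rw [Measure.volume_eq_prod, Measure.prod_prod, Measure.volume_eq_prod, Measure.prod_prod,
    Real.volume_Ioo, Real.volume_Ioo, Real.volume_Ioc,
    ← ENNReal.ofReal_mul (sub_nonneg.mpr hy), ← ENNReal.ofReal_mul (sub_nonneg.mpr hx)]

lemma geom_sum_le_two : ∑' n : ℕ, (ENNReal.ofReal (Real.exp (-1)))^n ≤ 2 := by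
  rw [ENNReal.tsum_geometric]
  rw [show (2:ℝ≥0∞) = (2⁻¹)⁻¹ by simp]
  apply ENNReal.inv_le_inv.mpr
  calc (2:ℝ≥0∞)⁻¹ = 1 - ENNReal.ofReal (1/2) := by
        rw [ENNReal.ofReal_div_of_pos] <;> simp
    _ ≤ 1 - ENNReal.ofReal (Real.exp (-1)) := by
        apply tsub_le_tsub_left
        apply ENNReal.ofReal_le_ofReal
        rw [Real.exp_neg, inv_le_comm₀ (Real.exp_pos 1) (by norm_num : (0:ℝ) < 1/2)]
        calc (1/2 : ℝ)⁻¹ = 2 := by norm_num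
          _ ≤ Real.exp 1 := by linarith [Real.add_one_le_exp (1:ℝ)]

lemma tsum_exp_le (M : ℝ) (hM : 0 ≤ M) :
    ∑' n : ℕ, ENNReal.ofReal (M * Real.exp (-(n:ℝ))) ≤ ENNReal.ofReal (2 * M) := by
  have hterm : ∀ n : ℕ, ENNReal.ofReal (M * Real.exp (-(n:ℝ)))
      = ENNReal.ofReal M * (ENNReal.ofReal (Real.exp (-1)))^n := by
    intro n
    rw [ENNReal.ofReal_mul hM]
    congr 1
    rw [← ENNReal.ofReal_pow (Real.exp_nonneg _)]
    congr 1
    rw [← Real.exp_nat_mul]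
    congr 1
    ring
  rw [tsum_congr hterm, ENNReal.tsum_mul_left]
  calc ENNReal.ofReal M * ∑' n : ℕ, (ENNReal.ofReal (Real.exp (-1)))^n
      ≤ ENNReal.ofReal M * 2 := mul_le_mul_right geom_sum_le_two _
    _ = ENNReal.ofReal (2 * M) := by
        rw [mul_comm (2:ℝ) M, ENNReal.ofReal_mul hM, ENNReal.ofReal_ofNat]

lemma solQDist_bounds {R : ℝ} (hR : 0 ≤ R) {p q : ℝ × ℝ × ℝ} (h : solQDist p q ≤ R) :
    |p.1 - q.1| ≤ R * Real.exp (p.2.2 + R / 2) ∧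
      |p.2.1 - q.2.1| ≤ R * Real.exp (-p.2.2 + R / 2) ∧ |p.2.2 - q.2.2| ≤ R := by
  obtain ⟨x, y, t⟩ := p
  obtain ⟨x', y', t'⟩ := q
  simp only [solQDist] at h ⊢
  have e1 : 0 ≤ Real.exp (-(t + t') / 2) * |x - x'| := by positivity
  have e2 : 0 ≤ Real.exp ((t + t') / 2) * |y - y'| := by positivity
  have e3 : 0 ≤ |t - t'| := abs_nonneg _
  have h3 : |t - t'| ≤ R := by linarith
  obtain ⟨hab1, hab2⟩ := abs_le.mp h3
  refine ⟨?_, ?_, h3⟩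
  · have h1 : Real.exp (-(t + t') / 2) * |x - x'| ≤ R := by linarith
    have hkey : |x - x'| ≤ R * Real.exp ((t + t') / 2) := by
      have h2 := mul_le_mul_of_nonneg_left h1 (Real.exp_nonneg ((t + t') / 2))
      calc |x - x'|
          = Real.exp ((t + t') / 2) * (Real.exp (-(t + t') / 2) * |x - x'|) := by
            rw [← mul_assoc, ← Real.exp_add,
              show (t + t') / 2 + -(t + t') / 2 = 0 by ring, Real.exp_zero, one_mul]
        _ ≤ Real.exp ((t + t') / 2) * R := h2
        _ = R * Real.exp ((t + t') / 2) := mul_comm _ _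
    refine hkey.trans (mul_le_mul_of_nonneg_left ?_ hR)
    exact Real.exp_le_exp.mpr (by linarith)
  · have h1 : Real.exp ((t + t') / 2) * |y - y'| ≤ R := by linarith
    have hkey : |y - y'| ≤ R * Real.exp (-(t + t') / 2) := by
      have h2 := mul_le_mul_of_nonneg_left h1 (Real.exp_nonneg (-(t + t') / 2))
      calc |y - y'|
          = Real.exp (-(t + t') / 2) * (Real.exp ((t + t') / 2) * |y - y'|) := by
            rw [← mul_assoc, ← Real.exp_add,
              show -(t + t') / 2 + (t + t') / 2 = 0 by ring, Real.exp_zero, one_mul]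
        _ ≤ Real.exp (-(t + t') / 2) * R := h2
        _ = R * Real.exp (-(t + t') / 2) := mul_comm _ _
    refine hkey.trans (mul_le_mul_of_nonneg_left ?_ hR)
    exact Real.exp_le_exp.mpr (by linarith)

noncomputable def coverS1 (a b R r s : ℝ) : Set (ℝ × ℝ × ℝ) :=
  Set.Ioo (-(solK R * r)) (a * r + solK R * r) ×ˢ
    Set.Ioo (-(solK R * s)) (b * s + solK R * s) ×ˢ
      Set.Ico (Real.log r - R) (Real.log r + R)

noncomputable def coverS2 (a b R r s : ℝ) : Set (ℝ × ℝ × ℝ) :=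
  Set.Ioo (-(solK R * r)) (a * r + solK R * r) ×ˢ
    Set.Ioo (-(solK R * s)) (b * s + solK R * s) ×ˢ
      Set.Ico (-Real.log s - R) (-Real.log s + R)

noncomputable def coverX0 (a b R r s : ℝ) (n : ℕ) : Set (ℝ × ℝ × ℝ) :=
  Set.Ioo (-(solc R * r * Real.exp (-(n:ℝ)))) (solc R * r * Real.exp (-(n:ℝ))) ×ˢ
    Set.Ioo (-(solK R * s)) (b * s + solK R * s) ×ˢ
      Set.Ioc (Real.log r - n - 1) (Real.log r - n)

noncomputable def coverX1 (a b R r s : ℝ) (n : ℕ) : Set (ℝ × ℝ × ℝ) :=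
  Set.Ioo (a * r - solc R * r * Real.exp (-(n:ℝ))) (a * r + solc R * r * Real.exp (-(n:ℝ))) ×ˢ
    Set.Ioo (-(solK R * s)) (b * s + solK R * s) ×ˢ
      Set.Ioc (Real.log r - n - 1) (Real.log r - n)

noncomputable def coverY0 (a b R r s : ℝ) (n : ℕ) : Set (ℝ × ℝ × ℝ) :=
  Set.Ioo (-(solK R * r)) (a * r + solK R * r) ×ˢ
    Set.Ioo (-(solc R * s * Real.exp (-(n:ℝ)))) (solc R * s * Real.exp (-(n:ℝ))) ×ˢ
      Set.Ico (-Real.log s + n) (-Real.log s + n + 1)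

noncomputable def coverY1 (a b R r s : ℝ) (n : ℕ) : Set (ℝ × ℝ × ℝ) :=
  Set.Ioo (-(solK R * r)) (a * r + solK R * r) ×ˢ
    Set.Ioo (b * s - solc R * s * Real.exp (-(n:ℝ))) (b * s + solc R * s * Real.exp (-(n:ℝ))) ×ˢ
      Set.Ico (-Real.log s + n) (-Real.log s + n + 1)

lemma solBdry_cover (a b R r s : ℝ) (hR : 0 < R) (hr : 0 < r) (hs : 0 < s) :
    solBdry R (solBox a b r s) ⊆
      coverS1 a b R r s ∪ coverS2 a b R r s ∪ (⋃ n, coverX0 a b R r s n) ∪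
        (⋃ n, coverX1 a b R r s n) ∪ (⋃ n, coverY0 a b R r s n) ∪
          (⋃ n, coverY1 a b R r s n) := by
  rintro ⟨x, y, t⟩ ⟨⟨q, hq, hdq⟩, q', hq', hdq'⟩
  obtain ⟨qx, qy, qt⟩ := q
  obtain ⟨qx', qy', qt'⟩ := q'
  obtain ⟨hx1, hy1, ht1⟩ := solQDist_bounds hR.le hdq
  obtain ⟨hx2, hy2, ht2⟩ := solQDist_bounds hR.le hdq'
  simp only at hx1 hy1 ht1 hx2 hy2 ht2
  simp only [solBox, Set.mem_prod, Set.mem_Ico] at hq hq'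
  obtain ⟨⟨hqx0, hqx1⟩, ⟨hqy0, hqy1⟩, hqt0, hqt1⟩ := hq
  obtain ⟨habx1, habx2⟩ := abs_le.mp hx1
  obtain ⟨haby1, haby2⟩ := abs_le.mp hy1
  obtain ⟨habt1, habt2⟩ := abs_le.mp ht1
  obtain ⟨habx1', habx2'⟩ := abs_le.mp hx2
  obtain ⟨haby1', haby2'⟩ := abs_le.mp hy2
  obtain ⟨habt1', habt2'⟩ := abs_le.mp ht2
  have htu : t < Real.log r + R := by linarith
  have htl : -Real.log s - R ≤ t := by linarith
  -- global exponential bounds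
  have hexp_x : R * Real.exp (t + R / 2) < solK R * r := by
    have h1 : Real.exp (t + R / 2) < Real.exp (2 * R) * r := by
      rw [← Real.exp_log hr, ← Real.exp_add]
      exact Real.exp_lt_exp.mpr (by linarith)
    have h2 := mul_lt_mul_of_pos_left h1 hR
    calc R * Real.exp (t + R / 2) < R * (Real.exp (2 * R) * r) := h2
      _ = solK R * r := by rw [solK]; ring
  have hexp_y : R * Real.exp (-t + R / 2) < solK R * s := by
    have h1 : Real.exp (-t + R / 2) < Real.exp (2 * R) * s := by
      rw [← Real.exp_log hs, ← Real.exp_add]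
      exact Real.exp_lt_exp.mpr (by linarith)
    have h2 := mul_lt_mul_of_pos_left h1 hR
    calc R * Real.exp (-t + R / 2) < R * (Real.exp (2 * R) * s) := h2
      _ = solK R * s := by rw [solK]; ring
  have hxg1 : -(solK R * r) < x := by linarith
  have hxg2 : x < a * r + solK R * r := by linarith
  have hyg1 : -(solK R * s) < y := by linarith
  have hyg2 : y < b * s + solK R * s := by linarith
  by_cases hc1 : Real.log r - R ≤ t
  · exact Or.inl (Or.inl (Or.inl (Or.inl (Or.inl
      ⟨⟨hxg1, hxg2⟩, ⟨hyg1, hyg2⟩, hc1, htu⟩))))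
  by_cases hc2 : t < -Real.log s + R
  · exact Or.inl (Or.inl (Or.inl (Or.inl (Or.inr
      ⟨⟨hxg1, hxg2⟩, ⟨hyg1, hyg2⟩, htl, hc2⟩))))
  push_neg at hc1 hc2
  -- middle band: the far point must exit through x or y
  have hqt0' : -Real.log s ≤ qt' := by linarith
  have hqt1' : qt' < Real.log r := by linarith
  by_cases hx' : 0 ≤ qx' ∧ qx' < a * r
  · by_cases hy' : 0 ≤ qy' ∧ qy' < b * s
    · exact absurd ⟨hx', hy', hqt0', hqt1'⟩ hq'
    · -- exits through y
      have hlt : 0 < t + Real.log s := by linarith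
      set n := ⌊t + Real.log s⌋₊ with hn
      have hn1 : (n : ℝ) ≤ t + Real.log s := Nat.floor_le hlt.le
      have hn2 : t + Real.log s < n + 1 := Nat.lt_floor_add_one _
      have hE : R * Real.exp (-t + R / 2) < solc R * s * Real.exp (-(n:ℝ)) := by
        have h1 : Real.exp (-t + R / 2) < Real.exp R * s * Real.exp (-(n:ℝ)) := by
          rw [← Real.exp_log hs, ← Real.exp_add, ← Real.exp_add]
          exact Real.exp_lt_exp.mpr (by linarith)
        have h2 := mul_lt_mul_of_pos_left h1 hR
        calc R * Real.exp (-t + R / 2)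
            < R * (Real.exp R * s * Real.exp (-(n:ℝ))) := h2
          _ = solc R * s * Real.exp (-(n:ℝ)) := by rw [solc]; ring
      rcases not_and_or.mp hy' with h | h
      · push_neg at h
        refine Or.inl (Or.inr (Set.mem_iUnion.mpr ⟨n, ?_⟩))
        exact ⟨⟨hxg1, hxg2⟩, ⟨by linarith, by linarith⟩, by linarith, by linarith⟩
      · push_neg at h
        refine Or.inr (Set.mem_iUnion.mpr ⟨n, ?_⟩)
        exact ⟨⟨hxg1, hxg2⟩, ⟨by linarith, by linarith⟩, by linarith, by linarith⟩
  · -- exits through x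
    have hlt : 0 < Real.log r - t := by linarith
    set n := ⌊Real.log r - t⌋₊ with hn
    have hn1 : (n : ℝ) ≤ Real.log r - t := Nat.floor_le hlt.le
    have hn2 : Real.log r - t < n + 1 := Nat.lt_floor_add_one _
    have hE : R * Real.exp (t + R / 2) < solc R * r * Real.exp (-(n:ℝ)) := by
      have h1 : Real.exp (t + R / 2) < Real.exp R * r * Real.exp (-(n:ℝ)) := by
        rw [← Real.exp_log hr, ← Real.exp_add, ← Real.exp_add]
        exact Real.exp_lt_exp.mpr (by linarith)
      have h2 := mul_lt_mul_of_pos_left h1 hR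
      calc R * Real.exp (t + R / 2)
          < R * (Real.exp R * r * Real.exp (-(n:ℝ))) := h2
        _ = solc R * r * Real.exp (-(n:ℝ)) := by rw [solc]; ring
    rcases not_and_or.mp hx' with h | h
    · push_neg at h
      refine Or.inl (Or.inl (Or.inl (Or.inr (Set.mem_iUnion.mpr ⟨n, ?_⟩))))
      exact ⟨⟨by linarith, by linarith⟩, ⟨hyg1, hyg2⟩, by linarith, by linarith⟩
    · push_neg at h
      refine Or.inl (Or.inl (Or.inr (Set.mem_iUnion.mpr ⟨n, ?_⟩)))
      exact ⟨⟨by linarith, by linarith⟩, ⟨hyg1, hyg2⟩, by linarith, by linarith⟩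

theorem sol_box_volume_and_boundary (a b R : ℝ) (ha : 0 < a) (hb : 0 < b) (hR : 0 < R) :
    (∀ r s : ℝ, 0 < r → 0 < s → 1 < r * s →
      volume (solBox a b r s) = ENNReal.ofReal (a * b * (r * s) * Real.log (r * s))) ∧
    ∃ C : ℝ, 0 < C ∧ ∀ r s : ℝ, 0 < r → 0 < s → Real.exp 1 ≤ r * s →
      volume (solBdry R (solBox a b r s)) ≤ ENNReal.ofReal (C * (r * s)) := by
  have hK : 0 < solK R := by rw [solK]; positivity
  have hc : 0 < solc R := by rw [solc]; positivity
  constructor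
  · intro r s hr hs hrs
    rw [solBox, vol3_IcoIcoIco _ _ _ _ _ _ (by positivity) (by positivity)]
    congr 1
    rw [Real.log_mul hr.ne' hs.ne']
    ring
  · refine ⟨4 * R * (a + 2 * solK R) * (b + 2 * solK R) + 8 * solc R * (b + 2 * solK R)
      + 8 * solc R * (a + 2 * solK R), by positivity, ?_⟩
    intro r s hr hs hrs
    have hbd1 : volume (coverS1 a b R r s)
        ≤ ENNReal.ofReal (2 * R * (a + 2 * solK R) * (b + 2 * solK R) * (r * s)) := by
      rw [coverS1, vol3_IooIooIco _ _ _ _ _ _ (by nlinarith) (by nlinarith)]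
      apply le_of_eq
      congr 1
      ring
    have hbd2 : volume (coverS2 a b R r s)
        ≤ ENNReal.ofReal (2 * R * (a + 2 * solK R) * (b + 2 * solK R) * (r * s)) := by
      rw [coverS2, vol3_IooIooIco _ _ _ _ _ _ (by nlinarith) (by nlinarith)]
      apply le_of_eq
      congr 1
      ring
    have hbd3 : volume (⋃ n, coverX0 a b R r s n)
        ≤ ENNReal.ofReal (2 * (2 * solc R * (b + 2 * solK R) * (r * s))) := by
      refine (measure_iUnion_le _).trans ?_
      have heq : ∀ n : ℕ, volume (coverX0 a b R r s n)
          = ENNReal.ofReal ((2 * solc R * (b + 2 * solK R) * (r * s)) * Real.exp (-(n:ℝ))) := by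
        intro n
        rw [coverX0, vol3_IooIooIoc _ _ _ _ _ _
          (by nlinarith [mul_pos (mul_pos hc hr) (Real.exp_pos (-(n:ℝ)))]) (by nlinarith)]
        congr 1
        ring
      rw [tsum_congr heq]
      exact tsum_exp_le _ (by positivity)
    have hbd4 : volume (⋃ n, coverX1 a b R r s n)
        ≤ ENNReal.ofReal (2 * (2 * solc R * (b + 2 * solK R) * (r * s))) := by
      refine (measure_iUnion_le _).trans ?_
      have heq : ∀ n : ℕ, volume (coverX1 a b R r s n)
          = ENNReal.ofReal ((2 * solc R * (b + 2 * solK R) * (r * s)) * Real.exp (-(n:ℝ))) := by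
        intro n
        rw [coverX1, vol3_IooIooIoc _ _ _ _ _ _
          (by nlinarith [mul_pos (mul_pos hc hr) (Real.exp_pos (-(n:ℝ)))]) (by nlinarith)]
        congr 1
        ring
      rw [tsum_congr heq]
      exact tsum_exp_le _ (by positivity)
    have hbd5 : volume (⋃ n, coverY0 a b R r s n)
        ≤ ENNReal.ofReal (2 * (2 * solc R * (a + 2 * solK R) * (r * s))) := by
      refine (measure_iUnion_le _).trans ?_
      have heq : ∀ n : ℕ, volume (coverY0 a b R r s n)
          = ENNReal.ofReal ((2 * solc R * (a + 2 * solK R) * (r * s)) * Real.exp (-(n:ℝ))) := by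
        intro n
        rw [coverY0, vol3_IooIooIco _ _ _ _ _ _ (by nlinarith)
          (by nlinarith [mul_pos (mul_pos hc hs) (Real.exp_pos (-(n:ℝ)))])]
        congr 1
        ring
      rw [tsum_congr heq]
      exact tsum_exp_le _ (by positivity)
    have hbd6 : volume (⋃ n, coverY1 a b R r s n)
        ≤ ENNReal.ofReal (2 * (2 * solc R * (a + 2 * solK R) * (r * s))) := by
      refine (measure_iUnion_le _).trans ?_
      have heq : ∀ n : ℕ, volume (coverY1 a b R r s n)
          = ENNReal.ofReal ((2 * solc R * (a + 2 * solK R) * (r * s)) * Real.exp (-(n:ℝ))) := by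
        intro n
        rw [coverY1, vol3_IooIooIco _ _ _ _ _ _ (by nlinarith)
          (by nlinarith [mul_pos (mul_pos hc hs) (Real.exp_pos (-(n:ℝ)))])]
        congr 1
        ring
      rw [tsum_congr heq]
      exact tsum_exp_le _ (by positivity)
    calc volume (solBdry R (solBox a b r s))
        ≤ volume (coverS1 a b R r s ∪ coverS2 a b R r s ∪ (⋃ n, coverX0 a b R r s n) ∪
            (⋃ n, coverX1 a b R r s n) ∪ (⋃ n, coverY0 a b R r s n) ∪
              (⋃ n, coverY1 a b R r s n)) :=
          measure_mono (solBdry_cover a b R r s hR hr hs)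
      _ ≤ volume (coverS1 a b R r s) + volume (coverS2 a b R r s) +
            volume (⋃ n, coverX0 a b R r s n) + volume (⋃ n, coverX1 a b R r s n) +
            volume (⋃ n, coverY0 a b R r s n) + volume (⋃ n, coverY1 a b R r s n) := by
          refine (measure_union_le _ _).trans ?_
          gcongr
          refine (measure_union_le _ _).trans ?_
          gcongr
          refine (measure_union_le _ _).trans ?_
          gcongr
          refine (measure_union_le _ _).trans ?_
          gcongr
          exact measure_union_le _ _
      _ ≤ ENNReal.ofReal (2 * R * (a + 2 * solK R) * (b + 2 * solK R) * (r * s)) +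
            ENNReal.ofReal (2 * R * (a + 2 * solK R) * (b + 2 * solK R) * (r * s)) +
            ENNReal.ofReal (2 * (2 * solc R * (b + 2 * solK R) * (r * s))) +
            ENNReal.ofReal (2 * (2 * solc R * (b + 2 * solK R) * (r * s))) +
            ENNReal.ofReal (2 * (2 * solc R * (a + 2 * solK R) * (r * s))) +
            ENNReal.ofReal (2 * (2 * solc R * (a + 2 * solK R) * (r * s))) := by
          gcongr <;> assumption
      _ = ENNReal.ofReal ((4 * R * (a + 2 * solK R) * (b + 2 * solK R) + 8 * solc R *
            (b + 2 * solK R) + 8 * solc R * (a + 2 * solK R)) * (r * s)) := by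
          rw [← ENNReal.ofReal_add (by positivity) (by positivity),
            ← ENNReal.ofReal_add (by positivity) (by positivity),
            ← ENNReal.ofReal_add (by positivity) (by positivity),
            ← ENNReal.ofReal_add (by positivity) (by positivity),
            ← ENNReal.ofReal_add (by positivity) (by positivity)]
          congr 1
          ring
end

section
/- Fix n ≥ 1, a₁,…,a_n > 0 and t > 0 such that e^{a_i t} is an even positive integer for every i (even-scaling). Set S_t := [0,e^{a₁t}) × ⋯ × [0,e^{a_n t}) × [0,1) × [0,t)ⁿ ⊆ ℝ^{n+1} × ℝⁿ and S_{2t} := [0,e^{2a₁t}) × ⋯ × [0,e^{2a_n t}) × [0,1) × [0,2t)ⁿ. Then there exists a finite set T ⊆ G_φ, all of whose elements have second component in {0,t}ⁿ, such that: (i) the translates g·S_t (g ∈ T, translation by G_φ multiplication) are pairwise disjoint with union S_{2t}; (ii) #T = 2ⁿ·e^{t(a₁+⋯+a_n)}; (iii) for each τ ∈ {0,t}ⁿ, exactly e^{t(a₁+⋯+a_n)} elements of T have second component τ (so exactly half of the translates have second component with first coordinate t); (iv) for each g ∈ T whose second component has first coordinate 0, the projection of g·S_t to the first coordinate is [k·e^{a₁t},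 (k+1)·e^{a₁t}) for some integer k ≥ 0, and exactly half of these elements have k even. -/
/-!
STATEMENT 12: tiling of S_{2t} by 2ⁿ·e^{t(a₁+⋯+a_n)} translates of S_t in the even-scaling
boundary one-dimensional abelian-by-abelian group G_φ = ℝ^{n+1} ⋊_φ ℝⁿ.
-/

/-- The roots α_j(s) = a_j s_j (j ≤ n) and α_{n+1}(s) = −∑ a_i s_i. -/
noncomputable def root {n : ℕ} (a : Fin n → ℝ) (s : Fin n → ℝ) (j : Fin (n + 1)) : ℝ :=
  if h : (j : ℕ) < n then a ⟨j, h⟩ * s ⟨j, h⟩ else -(∑ i, a i * s i)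

/-- The multiplication of G_φ on ℝ^{n+1} × ℝⁿ: (x,s)·(x',s') = (x + φ(s)x', s+s'). -/
noncomputable def gMul {n : ℕ} (a : Fin n → ℝ)
    (g h : (Fin (n + 1) → ℝ) × (Fin n → ℝ)) : (Fin (n + 1) → ℝ) × (Fin n → ℝ) :=
  (fun j => g.1 j + Real.exp (root a g.2 j) * h.1 j, g.2 + h.2)

/-- The Følner box S_t = [0,e^{a₁t}) × ⋯ × [0,e^{a_n t}) × [0,1) × [0,t)ⁿ. -/
noncomputable def Sbox {n : ℕ} (a : Fin n → ℝ) (t : ℝ) :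
    Set ((Fin (n + 1) → ℝ) × (Fin n → ℝ)) :=
  {p | (∀ j : Fin (n + 1),
          0 ≤ p.1 j ∧ p.1 j < (if h : (j : ℕ) < n then Real.exp (a ⟨j, h⟩ * t) else 1)) ∧
       ∀ i : Fin n, 0 ≤ p.2 i ∧ p.2 i < t}

namespace HRT
variable {n : ℕ}
noncomputable def Blen (a : Fin n → ℝ) (t : ℝ) (j : Fin (n + 1)) : ℝ :=
  if h : (j : ℕ) < n then Real.exp (a ⟨j, h⟩ * t) else 1
lemma Blen_pos (a : Fin n → ℝ) (t : ℝ) (j : Fin (n + 1)) : 0 < Blen a t j := by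
  unfold Blen; split
  · exact Real.exp_pos _
  · exact one_pos
lemma mem_Sbox {a : Fin n → ℝ} {t : ℝ} {p : (Fin (n + 1) → ℝ) × (Fin n → ℝ)} :
    p ∈ Sbox a t ↔ (∀ j, 0 ≤ p.1 j ∧ p.1 j < Blen a t j) ∧ ∀ i, 0 ≤ p.2 i ∧ p.2 i < t :=
  Iff.rfl
lemma mem_image_box {a : Fin n → ℝ} {t : ℝ} (g p : (Fin (n + 1) → ℝ) × (Fin n → ℝ)) :
    p ∈ gMul a g '' Sbox a t ↔
      ((∀ j, g.1 j ≤ p.1 j ∧ p.1 j < g.1 j + Real.exp (root a g.2 j) * Blen a t j) ∧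
       ∀ i, g.2 i ≤ p.2 i ∧ p.2 i < g.2 i + t) := by
  constructor
  · rintro ⟨q, hq, rfl⟩
    rw [mem_Sbox] at hq
    refine ⟨fun j => ?_, fun i => ?_⟩
    · have e := Real.exp_pos (root a g.2 j)
      have h1 := (hq.1 j).1
      have h2 := (hq.1 j).2
      constructor
      · simp only [gMul]; nlinarith
      · simp only [gMul]; nlinarith
    · have h1 := (hq.2 i).1
      have h2 := (hq.2 i).2
      constructor
      · simp only [gMul, Pi.add_apply]; linarith
      · simp only [gMul, Pi.add_apply]; linarith
  · rintro ⟨h1, h2⟩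
    refine ⟨(fun j => (p.1 j - g.1 j) / Real.exp (root a g.2 j), fun i => p.2 i - g.2 i), ?_, ?_⟩
    · rw [mem_Sbox]
      refine ⟨fun j => ?_, fun i => ?_⟩
      · have e := Real.exp_pos (root a g.2 j)
        constructor
        · exact div_nonneg (by linarith [(h1 j).1]) e.le
        · rw [div_lt_iff₀ e]
          have := (h1 j).2
          show p.1 j - g.1 j < Blen a t j * Real.exp (root a g.2 j)
          nlinarith
      · exact ⟨by linarith [(h2 i).1], by linarith [(h2 i).2]⟩
    · have e : ∀ j, Real.exp (root a g.2 j) ≠ 0 := fun j => (Real.exp_pos _).ne'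
      refine Prod.ext (funext fun j => ?_) (funext fun i => ?_)
      · simp only [gMul]
        field_simp
        ring
      · simp only [gMul, Pi.add_apply]
        ring
def Pb (M : Fin n → ℕ) (b : Fin n → Bool) : ℕ :=
  ∏ i ∈ Finset.univ.filter (fun i => b i = true), M i
lemma card_pi_eq (M : Fin n → ℕ) (b : Fin n → Bool) :
    Fintype.card ((i : {i : Fin n // b i = true}) → Fin (M i.1)) = Pb M b := by
  rw [Fintype.card_pi]
  simp only [Fintype.card_fin]
  exact (Finset.prod_subtype _ (by simp) _).symm
noncomputable def digEquiv (M : Fin n → ℕ) (b : Fin n → Bool) :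
    ((i : {i : Fin n // b i = true}) → Fin (M i.1)) ≃ Fin (Pb M b) :=
  Fintype.equivFinOfCardEq (card_pi_eq M b)
abbrev Idx (M : Fin n → ℕ) := ((i : Fin n) → Fin (M i)) × (Fin n → Bool)
instance (M : Fin n → ℕ) : Fintype (Idx M) := instFintypeProd _ _

lemma card_Idx (M : Fin n → ℕ) : Fintype.card (Idx M) = (∏ i, M i) * 2 ^ n := by
  classical
  show Fintype.card (((i : Fin n) → Fin (M i)) × (Fin n → Bool)) = _
  rw [Fintype.card_prod, Fintype.card_pi, Fintype.card_pi]
  simp [Finset.prod_const]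
noncomputable def emb (a : Fin n → ℝ) (t : ℝ) (M : Fin n → ℕ) (x : Idx M) :
    (Fin (n + 1) → ℝ) × (Fin n → ℝ) :=
  (fun j => if h : (j : ℕ) < n then
      (if x.2 ⟨j, h⟩ then 0 else (x.1 ⟨j, h⟩ : ℝ) * Real.exp (a ⟨j, h⟩ * t))
    else ((digEquiv M x.2 (fun i => x.1 i.1) : ℕ) : ℝ) / (Pb M x.2 : ℝ),
   fun i => if x.2 i then t else 0)
/-- the mixed-radix value encoded in the last coordinate -/
noncomputable def mval (M : Fin n → ℕ) (x : Idx M) : ℕ :=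
  (digEquiv M x.2 (fun i => x.1 i.1) : ℕ)

section
variable {a : Fin n → ℝ} {t : ℝ} {M : Fin n → ℕ}
  (hM : ∀ i, ((M i : ℕ) : ℝ) = Real.exp (a i * t))

include hM

lemma M_pos (i : Fin n) : 0 < M i := by
  have := Real.exp_pos (a i * t)
  rw [← hM] at this
  exact_mod_cast this

lemma Pb_pos (b : Fin n → Bool) : 0 < Pb M b :=
  Finset.prod_pos fun i _ => M_pos hM i

lemma Pb_cast (b : Fin n → Bool) :
    ((Pb M b : ℕ) : ℝ) = Real.exp (∑ i, a i * (if b i then t else 0)) := by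
  have : (∑ i, a i * (if b i then t else 0))
      = ∑ i ∈ Finset.univ.filter (fun i => b i = true), a i * t := by
    rw [Finset.sum_filter]
    apply Finset.sum_congr rfl
    intro i _
    by_cases h : b i = true <;> simp [h]
  rw [this, Real.exp_sum, Pb, Nat.cast_prod]
  exact Finset.prod_congr rfl fun i _ => hM i

lemma exp_root_last (x : Idx M) {j : Fin (n + 1)} (h : ¬ (j : ℕ) < n) :
    Real.exp (root a (emb a t M x).2 j) = ((Pb M x.2 : ℕ) : ℝ)⁻¹ := by
  rw [root, dif_neg h, Real.exp_neg]
  congr 1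
  exact (Pb_cast hM x.2).symm

/-- Normal form of the box `(emb x) · S_t`. -/
lemma mem_box_emb (x : Idx M) (p : (Fin (n + 1) → ℝ) × (Fin n → ℝ)) :
    p ∈ gMul a (emb a t M x) '' Sbox a t ↔
      ((∀ i : Fin n, if x.2 i then t ≤ p.2 i ∧ p.2 i < t + t else 0 ≤ p.2 i ∧ p.2 i < t) ∧
       (∀ i : Fin n, if x.2 i
          then 0 ≤ p.1 i.castSucc ∧ p.1 i.castSucc < (M i : ℝ) * (M i : ℝ)
          else (x.1 i : ℝ) * (M i : ℝ) ≤ p.1 i.castSucc ∧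
               p.1 i.castSucc < ((x.1 i : ℝ) + 1) * (M i : ℝ)) ∧
       ((mval M x : ℝ) / (Pb M x.2 : ℝ) ≤ p.1 (Fin.last n) ∧
        p.1 (Fin.last n) < ((mval M x : ℝ) + 1) / (Pb M x.2 : ℝ))) := by
  classical
  rw [mem_image_box]
  have hPb : (0 : ℝ) < ((Pb M x.2 : ℕ) : ℝ) := by exact_mod_cast Pb_pos hM x.2
  have hforall : ∀ C : Fin (n + 1) → Prop,
      (∀ j, C j) ↔ (∀ i : Fin n, C i.castSucc) ∧ C (Fin.last n) :=
    fun C => ⟨fun h => ⟨fun i => h _, h _⟩, fun h j => Fin.lastCases h.2 h.1 j⟩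
  rw [hforall]
  have hcs : ∀ i : Fin n, (⟨((i.castSucc : Fin (n+1)) : ℕ), i.isLt⟩ : Fin n) = i := by
    intro i; ext; simp
  have hlast : ¬ ((Fin.last n : Fin (n+1)) : ℕ) < n := by simp
  have c2 : (∀ i : Fin n, (emb a t M x).2 i ≤ p.2 i ∧ p.2 i < (emb a t M x).2 i + t) ↔
      (∀ i : Fin n, if x.2 i then t ≤ p.2 i ∧ p.2 i < t + t else 0 ≤ p.2 i ∧ p.2 i < t) := by
    refine forall_congr' fun i => ?_
    show (if x.2 i then t else 0) ≤ p.2 i ∧ p.2 i < (if x.2 i then t else 0) + t ↔ _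
    by_cases hb : x.2 i
    · simp only [hb, if_true]
    · simp only [hb, if_false, Bool.false_eq_true, zero_add]
  have c1 : (∀ i : Fin n, (emb a t M x).1 i.castSucc ≤ p.1 i.castSucc ∧
        p.1 i.castSucc < (emb a t M x).1 i.castSucc
          + Real.exp (root a (emb a t M x).2 i.castSucc) * Blen a t i.castSucc) ↔
      (∀ i : Fin n, if x.2 i
          then 0 ≤ p.1 i.castSucc ∧ p.1 i.castSucc < (M i : ℝ) * (M i : ℝ)
          else (x.1 i : ℝ) * (M i : ℝ) ≤ p.1 i.castSucc ∧
               p.1 i.castSucc < ((x.1 i : ℝ) + 1) * (M i : ℝ)) := by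
    refine forall_congr' fun i => ?_
    have hlt : ((i.castSucc : Fin (n+1)) : ℕ) < n := i.isLt
    have hg1 : (emb a t M x).1 i.castSucc
        = if x.2 i then 0 else (x.1 i : ℝ) * Real.exp (a i * t) := by
      simp only [emb]; rw [dif_pos hlt, hcs i]
    have hroot : root a (emb a t M x).2 i.castSucc = a i * (if x.2 i then t else 0) := by
      rw [root, dif_pos hlt, hcs i]; rfl
    have hBlen : Blen a t i.castSucc = Real.exp (a i * t) := by
      rw [Blen, dif_pos hlt, hcs i]
    rw [hg1, hroot, hBlen]
    have hMi := hM i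
    by_cases hb : x.2 i
    · simp only [hb, if_true, zero_add]
      rw [← Real.exp_add, show a i * t + a i * t = a i * t + a i * t from rfl,
        Real.exp_add, ← hMi]
    · simp only [hb, if_false, Bool.false_eq_true, mul_zero, Real.exp_zero, one_mul, ← hMi]
      constructor
      · rintro ⟨u, v⟩; exact ⟨u, by linarith [v]⟩
      · rintro ⟨u, v⟩; exact ⟨u, by nlinarith [v]⟩
  have c3 : ((emb a t M x).1 (Fin.last n) ≤ p.1 (Fin.last n) ∧
        p.1 (Fin.last n) < (emb a t M x).1 (Fin.last n)
          + Real.exp (root a (emb a t M x).2 (Fin.last n)) * Blen a t (Fin.last n)) ↔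
      ((mval M x : ℝ) / (Pb M x.2 : ℝ) ≤ p.1 (Fin.last n) ∧
       p.1 (Fin.last n) < ((mval M x : ℝ) + 1) / (Pb M x.2 : ℝ)) := by
    have he := exp_root_last hM x hlast
    have hBlen : Blen a t (Fin.last n) = 1 := by rw [Blen, dif_neg hlast]
    have hg1 : (emb a t M x).1 (Fin.last n) = (mval M x : ℝ) / (Pb M x.2 : ℝ) := by
      simp only [emb, mval]; rw [dif_neg hlast]
    rw [hg1, he, hBlen, mul_one]
    have harith : ((mval M x : ℝ) + 1) / (Pb M x.2 : ℝ)
        = (mval M x : ℝ) / (Pb M x.2 : ℝ) + ((Pb M x.2 : ℝ))⁻¹ := by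
      field_simp
    rw [harith]
  rw [c1, c2, c3]
  tauto

omit hM in
lemma nat_unique {c u : ℝ} (hc : 0 < c) {k l : ℕ}
    (h1 : (k : ℝ) * c ≤ u) (h2 : u < ((k : ℝ) + 1) * c)
    (h3 : (l : ℝ) * c ≤ u) (h4 : u < ((l : ℝ) + 1) * c) : k = l := by
  have hkl : (k : ℝ) < (l : ℝ) + 1 := by
    by_contra hcon
    push_neg at hcon
    nlinarith
  have hlk : (l : ℝ) < (k : ℝ) + 1 := by
    by_contra hcon
    push_neg at hcon
    nlinarith
  have h1' : k < l + 1 := by exact_mod_cast hkl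
  have h2' : l < k + 1 := by exact_mod_cast hlk
  omega

lemma box_disjoint (ht : 0 < t) {x y : Idx M} (hxy : x ≠ y) :
    Disjoint (gMul a (emb a t M x) '' Sbox a t) (gMul a (emb a t M y) '' Sbox a t) := by
  rw [Set.disjoint_left]
  intro p hp hq
  rw [mem_box_emb hM] at hp hq
  apply hxy
  obtain ⟨r, b⟩ := x
  obtain ⟨r', b'⟩ := y
  have hb : b = b' := by
    funext i
    have h1 := hp.1 i
    have h2 := hq.1 i
    by_cases hbi : b i <;> by_cases hbi' : b' i <;>
      simp only [hbi, hbi', if_true, if_false] at h1 h2 ⊢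
    · exfalso
      simp only [Bool.false_eq_true, if_false] at h2
      linarith [h1.1, h2.2]
    · exfalso
      simp only [Bool.false_eq_true, if_false] at h1
      linarith [h2.1, h1.2]
  subst hb
  have hPb : (0 : ℝ) < ((Pb M b : ℕ) : ℝ) := by exact_mod_cast Pb_pos hM b
  have hmval : mval M (r, b) = mval M (r', b) := by
    have h1 := hp.2.2
    have h2 := hq.2.2
    rw [div_eq_mul_inv, div_eq_mul_inv] at h1 h2
    exact nat_unique (inv_pos.mpr hPb) h1.1 h1.2 h2.1 h2.2
  have hdig : (fun i : {i : Fin n // b i = true} => r i.1)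
      = (fun i : {i : Fin n // b i = true} => r' i.1) := by
    apply (digEquiv M b).injective
    exact Fin.ext hmval
  have hr : r = r' := by
    funext i
    by_cases hbi : b i = true
    · exact congrFun hdig ⟨i, hbi⟩
    · have h1 := hp.2.1 i
      have h2 := hq.2.1 i
      rw [if_neg hbi] at h1 h2
      have hMi : (0 : ℝ) < (M i : ℝ) := by exact_mod_cast M_pos hM i
      exact Fin.ext (nat_unique hMi h1.1 h1.2 h2.1 h2.2)
  rw [hr]

lemma exp_two_t (i : Fin n) : Real.exp (a i * (2 * t)) = (M i : ℝ) * (M i : ℝ) := by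
  rw [show a i * (2 * t) = a i * t + a i * t by ring, Real.exp_add, hM i]

lemma box_subset (ht : 0 < t) (x : Idx M) :
    gMul a (emb a t M x) '' Sbox a t ⊆ Sbox a (2 * t) := by
  intro p hp
  rw [mem_box_emb hM] at hp
  obtain ⟨hs, hx, hl⟩ := hp
  rw [mem_Sbox]
  have hPb : (0 : ℝ) < ((Pb M x.2 : ℕ) : ℝ) := by exact_mod_cast Pb_pos hM x.2
  have hforall : ∀ C : Fin (n + 1) → Prop,
      (∀ i : Fin n, C i.castSucc) → C (Fin.last n) → (∀ j, C j) :=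
    fun C h1 h2 j => Fin.lastCases h2 h1 j
  constructor
  · apply hforall
    · intro i
      have hcs : (⟨((i.castSucc : Fin (n+1)) : ℕ), i.isLt⟩ : Fin n) = i := by ext; simp
      have hlt : ((i.castSucc : Fin (n+1)) : ℕ) < n := i.isLt
      have hBlen : Blen a (2 * t) i.castSucc = (M i : ℝ) * (M i : ℝ) := by
        rw [Blen, dif_pos hlt, hcs, exp_two_t hM]
      rw [hBlen]
      have := hx i
      have hMi : (0 : ℝ) < (M i : ℝ) := by exact_mod_cast M_pos hM i
      by_cases hbi : x.2 i
      · rw [if_pos hbi] at this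
        exact this
      · rw [if_neg hbi] at this
        have hlt : ((x.1 i : ℕ) : ℝ) + 1 ≤ (M i : ℝ) := by
          exact_mod_cast Nat.succ_le_of_lt (x.1 i).isLt
        constructor
        · nlinarith [this.1]
        · nlinarith [this.2]
    · have hlast : ¬ ((Fin.last n : Fin (n+1)) : ℕ) < n := by simp
      rw [Blen, dif_neg hlast]
      have hm1 : ((mval M x : ℕ) : ℝ) + 1 ≤ ((Pb M x.2 : ℕ) : ℝ) := by
        exact_mod_cast Nat.succ_le_of_lt (digEquiv M x.2 (fun i => x.1 i.1)).isLt
      constructor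
      · exact le_trans (by positivity) hl.1
      · calc p.1 (Fin.last n) < ((mval M x : ℝ) + 1) / (Pb M x.2 : ℝ) := hl.2
          _ ≤ 1 := by rw [div_le_one hPb]; linarith
  · intro i
    have := hs i
    by_cases hbi : x.2 i
    · rw [if_pos hbi] at this
      exact ⟨by linarith [this.1], by linarith [this.2]⟩
    · rw [if_neg hbi] at this
      exact ⟨this.1, by linarith [this.2]⟩

lemma cover (ht : 0 < t) {p : (Fin (n + 1) → ℝ) × (Fin n → ℝ)} (hp : p ∈ Sbox a (2 * t)) :
    ∃ x : Idx M, p ∈ gMul a (emb a t M x) '' Sbox a t := by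
  classical
  rw [mem_Sbox] at hp
  obtain ⟨hx, hs⟩ := hp
  set b : Fin n → Bool := fun i => decide (t ≤ p.2 i) with hbdef
  have hPb0 : 0 < Pb M b := Pb_pos hM b
  have hPb : (0 : ℝ) < ((Pb M b : ℕ) : ℝ) := by exact_mod_cast hPb0
  -- bounds on last coordinate
  have hlast : ¬ ((Fin.last n : Fin (n+1)) : ℕ) < n := by simp
  have hlb := hx (Fin.last n)
  rw [Blen, dif_neg hlast] at hlb
  have hm : ⌊p.1 (Fin.last n) * (Pb M b : ℝ)⌋₊ < Pb M b := by
    rw [Nat.floor_lt (mul_nonneg hlb.1 hPb.le)]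
    calc p.1 (Fin.last n) * (Pb M b : ℝ) < 1 * (Pb M b : ℝ) := by
          exact mul_lt_mul_of_pos_right hlb.2 hPb
      _ = (Pb M b : ℝ) := one_mul _
  -- bounds on other coordinates
  have hcoord : ∀ i : Fin n, 0 ≤ p.1 i.castSucc ∧ p.1 i.castSucc < (M i : ℝ) * (M i : ℝ) := by
    intro i
    have hcs : (⟨((i.castSucc : Fin (n+1)) : ℕ), i.isLt⟩ : Fin n) = i := by ext; simp
    have := hx i.castSucc
    have hlt : ((i.castSucc : Fin (n+1)) : ℕ) < n := i.isLt
    rw [Blen, dif_pos hlt, hcs, exp_two_t hM] at this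
    exact this
  have hfl : ∀ i : Fin n, ⌊p.1 i.castSucc / (M i : ℝ)⌋₊ < M i := by
    intro i
    have hMi : (0 : ℝ) < (M i : ℝ) := by exact_mod_cast M_pos hM i
    rw [Nat.floor_lt (div_nonneg (hcoord i).1 hMi.le), div_lt_iff₀ hMi]
    exact (hcoord i).2
  set r : (i : Fin n) → Fin (M i) := fun i =>
    if h : b i = true then ((digEquiv M b).symm ⟨_, hm⟩) ⟨i, h⟩
    else ⟨⌊p.1 i.castSucc / (M i : ℝ)⌋₊, hfl i⟩ with hrdef
  refine ⟨(r, b), ?_⟩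
  rw [mem_box_emb hM]
  have hmv : mval M (r, b) = ⌊p.1 (Fin.last n) * (Pb M b : ℝ)⌋₊ := by
    show ((digEquiv M b) (fun i : {i : Fin n // b i = true} => r i.1) : ℕ) = _
    have : (fun i : {i : Fin n // b i = true} => r i.1)
        = (digEquiv M b).symm ⟨_, hm⟩ := by
      funext i
      show r i.1 = _
      rw [hrdef]
      simp only [dif_pos i.2]
    rw [this, Equiv.apply_symm_apply]
  refine ⟨fun i => ?_, fun i => ?_, ?_⟩
  · by_cases hbi : b i
    · rw [if_pos hbi]
      have := of_decide_eq_true hbi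
      exact ⟨this, by linarith [(hs i).2]⟩
    · rw [if_neg hbi]
      have : ¬ (t ≤ p.2 i) := by
        intro hcon
        exact hbi (decide_eq_true hcon)
      exact ⟨(hs i).1, by linarith [not_le.mp this]⟩
  · by_cases hbi : b i
    · rw [if_pos hbi]
      exact hcoord i
    · rw [if_neg hbi]
      have hMi : (0 : ℝ) < (M i : ℝ) := by exact_mod_cast M_pos hM i
      have hri : ((r i : ℕ) : ℝ) = (⌊p.1 i.castSucc / (M i : ℝ)⌋₊ : ℝ) := by
        rw [hrdef]; simp only [dif_neg hbi]
      rw [hri]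
      constructor
      · rw [← le_div_iff₀ hMi]
        exact Nat.floor_le (div_nonneg (hcoord i).1 hMi.le)
      · rw [← div_lt_iff₀ hMi]
        exact Nat.lt_floor_add_one _
  · rw [hmv]
    constructor
    · rw [div_le_iff₀ hPb]
      exact Nat.floor_le (mul_nonneg hlb.1 hPb.le)
    · rw [lt_div_iff₀ hPb]
      exact Nat.lt_floor_add_one _

lemma emb_injective (ht : 0 < t) : Function.Injective (emb a t M) := by
  intro x y hxy
  by_contra hne
  have hd := box_disjoint hM ht hne
  rw [hxy] at hd
  have hmem : gMul a (emb a t M y) (fun _ => 0, fun _ => 0)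
      ∈ gMul a (emb a t M y) '' Sbox a t := by
    refine Set.mem_image_of_mem _ ?_
    rw [mem_Sbox]
    exact ⟨fun j => ⟨le_refl 0, Blen_pos a t j⟩, fun i => ⟨le_refl 0, ht⟩⟩
  exact Set.disjoint_left.mp hd hmem hmem

omit hM in
lemma proj_box (ht : 0 < t) (g : (Fin (n + 1) → ℝ) × (Fin n → ℝ)) (j0 : Fin (n + 1)) :
    (fun p : (Fin (n + 1) → ℝ) × (Fin n → ℝ) => p.1 j0) '' (gMul a g '' Sbox a t)
      = Set.Ico (g.1 j0) (g.1 j0 + Real.exp (root a g.2 j0) * Blen a t j0) := by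
  classical
  ext v
  constructor
  · rintro ⟨p, hp, rfl⟩
    rw [mem_image_box] at hp
    exact ⟨(hp.1 j0).1, (hp.1 j0).2⟩
  · intro hv
    refine ⟨(Function.update g.1 j0 v, g.2), ?_, Function.update_self j0 v g.1⟩
    rw [mem_image_box]
    refine ⟨fun j => ?_, fun i => ⟨le_refl _, by linarith⟩⟩
    dsimp only
    by_cases hj : j = j0
    · subst hj
      rw [Function.update_self]
      exact ⟨hv.1, hv.2⟩
    · rw [Function.update_of_ne hj]
      have := mul_pos (Real.exp_pos (root a g.2 j)) (Blen_pos a t j)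
      exact ⟨le_refl _, by linarith⟩

omit hM in
lemma Ico_left_inj {u v w z : ℝ} (h : Set.Ico u v = Set.Ico w z) (huv : u < v) : u = w := by
  have h1 : u ∈ Set.Ico w z := h ▸ Set.mem_Ico.mpr ⟨le_refl u, huv⟩
  have h2 : w ∈ Set.Ico u v := by
    rw [h]
    exact Set.mem_Ico.mpr ⟨le_refl w, lt_of_le_of_lt h1.1 h1.2⟩
  exact le_antisymm h2.1 h1.1

lemma prod_M_cast : ((∏ i, M i : ℕ) : ℝ) = Real.exp (t * ∑ i, a i) := by
  rw [Nat.cast_prod]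
  calc ∏ i, ((M i : ℕ) : ℝ) = ∏ i, Real.exp (a i * t) :=
        Finset.prod_congr rfl fun i _ => hM i
    _ = Real.exp (∑ i, a i * t) := (Real.exp_sum _ _).symm
    _ = Real.exp (t * ∑ i, a i) := by rw [← Finset.sum_mul, mul_comm]

omit hM in
lemma ncard_fiber (b : Fin n → Bool) : ({x : Idx M | x.2 = b}).ncard = ∏ i, M i := by
  classical
  have himg : {x : Idx M | x.2 = b} = (fun r : (i : Fin n) → Fin (M i) => (r, b)) '' Set.univ := by
    ext x
    constructor
    · intro hx
      exact ⟨x.1, trivial, Prod.ext rfl hx.symm⟩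
    · rintro ⟨r, -, rfl⟩
      rfl
  rw [himg, Set.ncard_image_of_injective _ (fun r r' h => (Prod.ext_iff.mp h).1),
    Set.ncard_univ, Nat.card_eq_fintype_card, Fintype.card_pi]
  simp

omit hM in
lemma even_half (i0 : Fin n) (hM0 : ∀ i, 0 < M i) (hEv : 2 ∣ M i0) :
    2 * ({x : Idx M | x.2 i0 = false ∧ Even ((x.1 i0 : ℕ))}).ncard
      = ({x : Idx M | x.2 i0 = false}).ncard := by
  classical
  have hMmod : M i0 % 2 = 0 := Nat.mod_eq_zero_of_dvd hEv
  set E := {x : Idx M | x.2 i0 = false ∧ Even ((x.1 i0 : ℕ))} with hE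
  set O := {x : Idx M | x.2 i0 = false ∧ ¬ Even ((x.1 i0 : ℕ))} with hO
  have hsplit : {x : Idx M | x.2 i0 = false} = E ∪ O := by
    ext x
    simp only [hE, hO, Set.mem_setOf_eq, Set.mem_union]
    tauto
  have hdisj : Disjoint E O := by
    rw [Set.disjoint_left]
    rintro x ⟨-, h⟩ ⟨-, h'⟩
    exact h' h
  have hsucc : ∀ r : ℕ, r < M i0 → Even r → r + 1 < M i0 := by
    intro r hr hev
    rw [Nat.even_iff] at hev
    omega
  set σ : Idx M → Idx M := fun x =>
    (Function.update x.1 i0 ⟨((x.1 i0 : ℕ) + 1) % M i0, Nat.mod_lt _ (hM0 i0)⟩, x.2) with hσ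
  have hσ1 : ∀ x : Idx M, ((σ x).1 i0 : ℕ) = ((x.1 i0 : ℕ) + 1) % M i0 := by
    intro x
    rw [hσ]
    show ((Function.update x.1 i0 _ i0 : Fin (M i0)) : ℕ) = _
    rw [Function.update_self]
  have hσ1' : ∀ (x : Idx M) (i : Fin n), i ≠ i0 → (σ x).1 i = x.1 i := by
    intro x i hi
    rw [hσ]
    show Function.update x.1 i0 _ i = x.1 i
    rw [Function.update_of_ne hi]
  have hσ2 : ∀ x : Idx M, (σ x).2 = x.2 := fun x => rfl
  have hOE : O = σ '' E := by
    ext y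
    constructor
    · rintro ⟨hb, hodd⟩
      rw [Nat.even_iff] at hodd
      have hy1 : 1 ≤ (y.1 i0 : ℕ) := by omega
      have hylt : (y.1 i0 : ℕ) < M i0 := (y.1 i0).isLt
      refine ⟨(Function.update y.1 i0 ⟨(y.1 i0 : ℕ) - 1, by omega⟩, y.2), ⟨hb, ?_⟩, ?_⟩
      · show Even ((Function.update y.1 i0 ⟨(y.1 i0 : ℕ) - 1, by omega⟩ i0 : ℕ))
        rw [Function.update_self, Nat.even_iff]
        show ((y.1 i0 : ℕ) - 1) % 2 = 0
        omega
      · refine Prod.ext (funext fun i => ?_) (hσ2 _)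
        by_cases hi : i = i0
        · subst hi
          refine Fin.ext ?_
          rw [hσ1]
          show ((Function.update y.1 i ⟨(y.1 i : ℕ) - 1, by omega⟩ i : ℕ) + 1) % M i = (y.1 i : ℕ)
          rw [Function.update_self]
          show ((y.1 i : ℕ) - 1 + 1) % M i = (y.1 i : ℕ)
          rw [show (y.1 i : ℕ) - 1 + 1 = (y.1 i : ℕ) by omega, Nat.mod_eq_of_lt hylt]
        · rw [hσ1' _ _ hi]
          show Function.update y.1 i0 _ i = y.1 i
          rw [Function.update_of_ne hi]
    · rintro ⟨x, ⟨hb, hev⟩, rfl⟩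
      have hlt1 : (x.1 i0 : ℕ) + 1 < M i0 := hsucc _ (x.1 i0).isLt hev
      refine ⟨hb, ?_⟩
      rw [hσ1 x, Nat.mod_eq_of_lt hlt1, Nat.even_add_one]
      exact fun h => h hev
  have hinj : Set.InjOn σ E := by
    rintro x ⟨hbx, hevx⟩ y ⟨hby, hevy⟩ hxy
    have h2 : x.2 = y.2 := by rw [← hσ2 x, ← hσ2 y, hxy]
    have h1 : x.1 = y.1 := by
      funext i
      by_cases hi : i = i0
      · subst hi
        have := hσ1 x
        rw [hxy, hσ1 y, Nat.mod_eq_of_lt (hsucc _ (y.1 i).isLt hevy),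
          Nat.mod_eq_of_lt (hsucc _ (x.1 i).isLt hevx)] at this
        exact Fin.ext (by omega)
      · rw [← hσ1' x _ hi, ← hσ1' y _ hi, hxy]
    exact Prod.ext h1 h2
  rw [hsplit, Set.ncard_union_eq hdisj (Set.toFinite _) (Set.toFinite _), hOE,
    Set.ncard_image_of_injOn hinj]
  ring

end
end HRT

theorem higher_rank_tiling (n : ℕ) (hn : 0 < n) (a : Fin n → ℝ) (ha : ∀ i, 0 < a i)
    (t : ℝ) (ht : 0 < t)
    -- even-scaling: each e^{a_i t} is an even positive integer
    (heven : ∀ i, ∃ N : ℕ, 0 < N ∧ Real.exp (a i * t) = 2 * N) :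
    ∃ T : Finset ((Fin (n + 1) → ℝ) × (Fin n → ℝ)),
      -- all translating elements have second component in {0,t}ⁿ
      (∀ g ∈ T, ∀ i : Fin n, g.2 i = 0 ∨ g.2 i = t) ∧
      -- (i) the translates g·S_t are pairwise disjoint with union S_{2t}
      (↑T : Set ((Fin (n + 1) → ℝ) × (Fin n → ℝ))).PairwiseDisjoint
        (fun g => gMul a g '' Sbox a t) ∧
      (⋃ g ∈ T, gMul a g '' Sbox a t) = Sbox a (2 * t) ∧
      -- (ii) #T = 2ⁿ·e^{t(a₁+⋯+a_n)}
      ((T.card : ℝ) = 2 ^ n * Real.exp (t * ∑ i, a i)) ∧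
      -- (iii) for each τ ∈ {0,t}ⁿ, exactly e^{t∑aᵢ} elements of T have second component τ
      (∀ τ : Fin n → ℝ, (∀ i, τ i = 0 ∨ τ i = t) →
        (({g ∈ (↑T : Set ((Fin (n + 1) → ℝ) × (Fin n → ℝ))) | g.2 = τ}).ncard : ℝ) =
          Real.exp (t * ∑ i, a i)) ∧
      -- (iv) translates with second component having first coordinate 0 project, in the
      -- first coordinate, onto [k e^{a₁t}, (k+1)e^{a₁t}) for some integer k ≥ 0 ...
      (∀ g ∈ T, g.2 ⟨0, hn⟩ = 0 →
        ∃ k : ℕ, (fun p => p.1 ⟨0, Nat.succ_pos n⟩) '' (gMul a g '' Sbox a t) =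
          Set.Ico ((k : ℝ) * Real.exp (a ⟨0, hn⟩ * t))
            (((k : ℝ) + 1) * Real.exp (a ⟨0, hn⟩ * t))) ∧
      -- ... and exactly half of these elements have k even
      2 * ({g ∈ (↑T : Set ((Fin (n + 1) → ℝ) × (Fin n → ℝ))) | g.2 ⟨0, hn⟩ = 0 ∧
            ∃ k : ℕ, Even k ∧
              (fun p => p.1 ⟨0, Nat.succ_pos n⟩) '' (gMul a g '' Sbox a t) =
                Set.Ico ((k : ℝ) * Real.exp (a ⟨0, hn⟩ * t))
                  (((k : ℝ) + 1) * Real.exp (a ⟨0, hn⟩ * t))}).ncard =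
        ({g ∈ (↑T : Set ((Fin (n + 1) → ℝ) × (Fin n → ℝ))) | g.2 ⟨0, hn⟩ = 0}).ncard := by
  classical
  choose N hNpos hNval using heven
  set M : Fin n → ℕ := fun i => 2 * N i with hMdef
  have hM : ∀ i, ((M i : ℕ) : ℝ) = Real.exp (a i * t) := by
    intro i
    rw [hNval i]
    show ((2 * N i : ℕ) : ℝ) = 2 * (N i : ℝ)
    push_cast
    ring
  have hM0 : ∀ i, 0 < M i := HRT.M_pos hM
  have hinj := HRT.emb_injective hM ht
  set T : Finset ((Fin (n + 1) → ℝ) × (Fin n → ℝ)) :=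
    Finset.image (HRT.emb a t M) Finset.univ with hT
  have hTcoe : (↑T : Set ((Fin (n + 1) → ℝ) × (Fin n → ℝ)))
      = Set.range (HRT.emb a t M) := by
    rw [hT, Finset.coe_image, Finset.coe_univ, Set.image_univ]
  set i0 : Fin n := ⟨0, hn⟩ with hi0
  set j0 : Fin (n + 1) := ⟨0, Nat.succ_pos n⟩ with hj0
  have hlt0 : ((j0 : Fin (n + 1)) : ℕ) < n := hn
  have hidx : (⟨((j0 : Fin (n + 1)) : ℕ), hlt0⟩ : Fin n) = i0 := rfl
  -- second component of emb
  have hsnd : ∀ (x : HRT.Idx M) (i : Fin n),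
      (HRT.emb a t M x).2 i = if x.2 i then t else 0 := fun x i => rfl
  -- membership in T
  have hmemT : ∀ x : HRT.Idx M, HRT.emb a t M x ∈ T := fun x => by
    rw [hT]; exact Finset.mem_image_of_mem _ (Finset.mem_univ x)
  -- from (emb x).2 i0 = 0 deduce x.2 i0 = false
  have hb0_of : ∀ x : HRT.Idx M, (HRT.emb a t M x).2 i0 = 0 → x.2 i0 = false := by
    intro x h0
    rw [hsnd] at h0
    by_cases hb : x.2 i0
    · rw [if_pos hb] at h0; exact absurd h0 ht.ne'
    · exact Bool.not_eq_true _ |>.mp hb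
  -- projection formula
  have hkey : ∀ x : HRT.Idx M, x.2 i0 = false →
      (fun p : (Fin (n + 1) → ℝ) × (Fin n → ℝ) => p.1 j0)
          '' (gMul a (HRT.emb a t M x) '' Sbox a t)
        = Set.Ico (((x.1 i0 : ℕ) : ℝ) * Real.exp (a i0 * t))
            ((((x.1 i0 : ℕ) : ℝ) + 1) * Real.exp (a i0 * t)) := by
    intro x hb0
    rw [HRT.proj_box ht _ j0]
    have h1 : (HRT.emb a t M x).1 j0 = ((x.1 i0 : ℕ) : ℝ) * Real.exp (a i0 * t) := by
      show (if h : ((j0 : Fin (n+1)) : ℕ) < n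
          then (if x.2 ⟨((j0 : Fin (n+1)) : ℕ), h⟩ then 0
            else ((x.1 ⟨((j0 : Fin (n+1)) : ℕ), h⟩ : ℕ) : ℝ)
              * Real.exp (a ⟨((j0 : Fin (n+1)) : ℕ), h⟩ * t))
          else _) = _
      rw [dif_pos hlt0, hidx, hb0]
      simp only [Bool.false_eq_true, if_false]
    have h2 : root a (HRT.emb a t M x).2 j0 = 0 := by
      rw [root, dif_pos hlt0, hidx, hsnd, hb0]
      simp only [Bool.false_eq_true, if_false, mul_zero]
    have h3 : HRT.Blen a t j0 = Real.exp (a i0 * t) := by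
      rw [HRT.Blen, dif_pos hlt0, hidx]
    rw [h1, h2, h3, Real.exp_zero]
    congr 1
    ring
  refine ⟨T, ?_, ?_, ?_, ?_, ?_, ?_, ?_⟩
  · -- τ ∈ {0,t}ⁿ
    intro g hg i
    rw [hT, Finset.mem_image] at hg
    obtain ⟨x, -, rfl⟩ := hg
    rw [hsnd]
    by_cases hb : x.2 i
    · rw [if_pos hb]; exact Or.inr rfl
    · rw [if_neg hb]; exact Or.inl rfl
  · -- pairwise disjoint
    intro g hg g' hg' hne
    rw [hTcoe] at hg hg'
    obtain ⟨x, rfl⟩ := hg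
    obtain ⟨y, rfl⟩ := hg'
    exact HRT.box_disjoint hM ht (fun h => hne (congrArg _ h))
  · -- union
    ext p
    rw [Set.mem_iUnion₂]
    constructor
    · rintro ⟨g, hg, hp⟩
      rw [hT, Finset.mem_image] at hg
      obtain ⟨x, -, rfl⟩ := hg
      exact HRT.box_subset hM ht x hp
    · intro hp
      obtain ⟨x, hx⟩ := HRT.cover hM ht hp
      exact ⟨HRT.emb a t M x, hmemT x, hx⟩
  · -- cardinality
    have hcard : T.card = (∏ i, M i) * 2 ^ n := by
      rw [hT, Finset.card_image_of_injective _ hinj, Finset.card_univ, HRT.card_Idx]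
    rw [hcard, Nat.cast_mul, HRT.prod_M_cast hM]
    push_cast
    ring
  · -- (iii)
    intro τ hτ
    set b : Fin n → Bool := fun i => decide (τ i = t) with hbdef
    have hτb : τ = fun i => if b i then t else 0 := by
      funext i
      by_cases hit : τ i = t
      · simp [hbdef, hit]
      · have h0 : τ i = 0 := (hτ i).resolve_right hit
        simp [hbdef, hit, h0, ht.ne]
    have hset : {g ∈ (↑T : Set ((Fin (n + 1) → ℝ) × (Fin n → ℝ))) | g.2 = τ}
        = HRT.emb a t M '' {x | x.2 = b} := by
      ext g
      simp only [Set.mem_setOf_eq, hTcoe, Set.mem_range, Set.mem_image]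
      constructor
      · rintro ⟨⟨x, rfl⟩, h2⟩
        refine ⟨x, funext fun i => ?_, rfl⟩
        have hc : (if x.2 i then t else 0) = τ i := by
          rw [← hsnd x i, h2]
        rw [hτb] at hc
        have hci : (if x.2 i = true then t else 0) = (if b i = true then t else 0) := hc
        cases hxb : x.2 i <;> cases hbb : b i
        · rfl
        · rw [hxb, hbb] at hci
          simp only [Bool.false_eq_true, if_false, if_true] at hci
          exact absurd hci ht.ne
        · rw [hxb, hbb] at hci
          simp only [Bool.false_eq_true, if_false, if_true] at hci
          exact absurd hci ht.ne'
        · rfl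
      · rintro ⟨x, hx, rfl⟩
        refine ⟨⟨x, rfl⟩, ?_⟩
        rw [hτb]
        funext i
        rw [hsnd, hx]
    rw [hset, Set.ncard_image_of_injective _ hinj, HRT.ncard_fiber b]
    exact HRT.prod_M_cast hM
  · -- (iv) existence of k
    intro g hg h0
    rw [hT, Finset.mem_image] at hg
    obtain ⟨x, -, rfl⟩ := hg
    have hb0 := hb0_of x h0
    exact ⟨(x.1 i0 : ℕ), hkey x hb0⟩
  · -- exactly half have k even
    have he : (0 : ℝ) < Real.exp (a i0 * t) := Real.exp_pos _
    have hAset : {g ∈ (↑T : Set ((Fin (n + 1) → ℝ) × (Fin n → ℝ))) | g.2 i0 = 0 ∧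
          ∃ k : ℕ, Even k ∧
            (fun p : (Fin (n + 1) → ℝ) × (Fin n → ℝ) => p.1 j0) '' (gMul a g '' Sbox a t) =
              Set.Ico ((k : ℝ) * Real.exp (a i0 * t))
                (((k : ℝ) + 1) * Real.exp (a i0 * t))}
        = HRT.emb a t M '' {x | x.2 i0 = false ∧ Even ((x.1 i0 : ℕ))} := by
      ext g
      simp only [Set.mem_setOf_eq, hTcoe, Set.mem_range, Set.mem_image]
      constructor
      · rintro ⟨⟨x, rfl⟩, h0, k, hkev, himg⟩
        have hb0 := hb0_of x h0
        refine ⟨x, ⟨hb0, ?_⟩, rfl⟩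
        have h1 := hkey x hb0
        rw [himg] at h1
        have hlt : ((k : ℝ)) * Real.exp (a i0 * t) < ((k : ℝ) + 1) * Real.exp (a i0 * t) := by
          nlinarith
        have := HRT.Ico_left_inj h1 hlt
        have hkr : (k : ℝ) = ((x.1 i0 : ℕ) : ℝ) := mul_right_cancel₀ he.ne' this
        have : k = (x.1 i0 : ℕ) := by exact_mod_cast hkr
        rwa [← this]
      · rintro ⟨x, ⟨hb0, hev⟩, rfl⟩
        refine ⟨⟨x, rfl⟩, ?_, (x.1 i0 : ℕ), hev, hkey x hb0⟩
        rw [hsnd, hb0]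
        simp
    have hBset : {g ∈ (↑T : Set ((Fin (n + 1) → ℝ) × (Fin n → ℝ))) | g.2 i0 = 0}
        = HRT.emb a t M '' {x | x.2 i0 = false} := by
      ext g
      simp only [Set.mem_setOf_eq, hTcoe, Set.mem_range, Set.mem_image]
      constructor
      · rintro ⟨⟨x, rfl⟩, h0⟩
        exact ⟨x, hb0_of x h0, rfl⟩
      · rintro ⟨x, hb0, rfl⟩
        refine ⟨⟨x, rfl⟩, ?_⟩
        rw [hsnd, hb0]
        simp
    rw [hAset, hBset, Set.ncard_image_of_injective _ hinj,
      Set.ncard_image_of_injective _ hinj]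
    exact HRT.even_half i0 hM0 ⟨N i0, rfl⟩
end

section
/- Let m ≥ 2 be an integer, Γ_m = ℤ[1/m] ⋊ ℤ, and fix the generating set S₀ = {(1,0), (0,1)} with associated word metric d. Fix r > 0 and R > 0. For j ≥ 1 define the Følner set F_j := {(a,k) ∈ Γ_m : a ∈ ℤ, 0 ≤ a < r·m^j, 0 ≤ k < j}. Then there exists a constant C > 0 (depending only on m, r and R) such that #∂_R F_j ≤ C·m^j for all j ≥ 1, and consequently #∂_R F_j / #F_j → 0 as j → ∞, i.e. the sets F_j form a Følner sequence. -/
/-!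
STATEMENT 13: the sets F_j = {(a,k) : a ∈ ℤ, 0 ≤ a < r·m^j, 0 ≤ k < j} form a Følner
sequence in Γ_m = ℤ[1/m] ⋊ ℤ ≅ BS(1,m), with #∂_R F_j ≤ C·m^j.
-/

/-- The subring ℤ[1/m] of ℚ. -/
def Zinv (m : ℕ) : Subring ℚ := Subring.closure {((m : ℚ))⁻¹}

lemma zpow_mem_Zinv (m : ℕ) (k : ℤ) : (m : ℚ) ^ k ∈ Zinv m := by
  induction k using Int.rec with
  | ofNat n => simpa using pow_mem (natCast_mem (Zinv m) m) n
  | negSucc n =>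
      rw [zpow_negSucc, ← inv_pow]
      exact pow_mem (Subring.subset_closure (Set.mem_singleton _)) _

/-- The group Γ_m = ℤ[1/m] ⋊ ℤ, with underlying set ℤ[1/m] × ℤ and multiplication
(a,k)·(b,l) = (a + m^k b, k + l). -/
@[ext]
structure BS (m : ℕ) where
  a : Zinv m
  k : ℤ

namespace BS

variable {m : ℕ}

noncomputable def mul' (g h : BS m) : BS m :=
  ⟨g.a + ⟨(m : ℚ) ^ g.k, zpow_mem_Zinv m g.k⟩ * h.a, g.k + h.k⟩

noncomputable def inv' (g : BS m) : BS m :=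
  ⟨-(⟨(m : ℚ) ^ (-g.k), zpow_mem_Zinv m (-g.k)⟩ * g.a), -g.k⟩

noncomputable instance [NeZero m] : Group (BS m) where
  mul := mul'
  one := ⟨0, 0⟩
  inv := inv'
  mul_assoc g h c := by
    have hm : (m : ℚ) ≠ 0 := Nat.cast_ne_zero.mpr (NeZero.ne m)
    show mul' (mul' g h) c = mul' g (mul' h c)
    unfold mul'
    ext
    · show ((g.a : ℚ) + (m : ℚ) ^ g.k * (h.a : ℚ)) + (m : ℚ) ^ (g.k + h.k) * (c.a : ℚ)
        = (g.a : ℚ) + (m : ℚ) ^ g.k * ((h.a : ℚ) + (m : ℚ) ^ h.k * (c.a : ℚ))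
      rw [zpow_add₀ hm]; ring
    · exact add_assoc _ _ _
  one_mul g := by
    show mul' ⟨0, 0⟩ g = g
    unfold mul'
    ext
    · show (0 : ℚ) + (m : ℚ) ^ (0 : ℤ) * (g.a : ℚ) = (g.a : ℚ)
      simp
    · exact zero_add _
  mul_one g := by
    show mul' g ⟨0, 0⟩ = g
    unfold mul'
    ext
    · show (g.a : ℚ) + (m : ℚ) ^ g.k * (0 : ℚ) = (g.a : ℚ)
      simp
    · exact add_zero _
  inv_mul_cancel g := by
    show mul' (inv' g) g = ⟨0, 0⟩
    unfold mul' inv'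
    ext
    · show -((m : ℚ) ^ (-g.k) * (g.a : ℚ)) + (m : ℚ) ^ (-g.k) * (g.a : ℚ) = (0 : ℚ)
      ring
    · exact neg_add_cancel _

end BS

/-- The word metric associated to a generating set `S`. -/
noncomputable def wordDist {G : Type*} [Group G] (S : Set G) (g h : G) : ℕ :=
  sInf {n : ℕ | ∃ l : List G, l.length = n ∧ (∀ w ∈ l, w ∈ S ∨ w⁻¹ ∈ S) ∧ g⁻¹ * h = l.prod}

/-- The standard generating set S₀ = {(1,0), (0,1)} of Γ_m. -/
noncomputable def bsGen (m : ℕ) : Set (BS m) := {⟨1, 0⟩, ⟨0, 1⟩}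

/-- The Følner set F_j = {(a,k) ∈ Γ_m : a ∈ ℤ, 0 ≤ a < r·m^j, 0 ≤ k < j}. -/
noncomputable def bsFolner (m : ℕ) (r : ℝ) (j : ℕ) : Set (BS m) :=
  {g | (∃ z : ℤ, (g.a : ℚ) = z) ∧ 0 ≤ ((g.a : ℚ) : ℝ) ∧
    ((g.a : ℚ) : ℝ) < r * (m : ℝ) ^ j ∧ 0 ≤ g.k ∧ g.k < (j : ℤ)}

/-- The R-boundary of A ⊆ Γ_m for the word metric d of S₀. -/
noncomputable def bsBdry (m : ℕ) [NeZero m] (R : ℝ) (A : Set (BS m)) : Set (BS m) :=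
  {γ | (∃ x ∈ A, (wordDist (bsGen m) γ x : ℝ) ≤ R) ∧
       (∃ x ∉ A, (wordDist (bsGen m) γ x : ℝ) ≤ R)}
namespace BS

variable {m : ℕ} [NeZero m]

lemma mul_a (g h : BS m) : ((g * h).a : ℚ) = (g.a : ℚ) + (m : ℚ) ^ g.k * (h.a : ℚ) := by
  show ((mul' g h).a : ℚ) = _
  simp [mul']

lemma mul_k (g h : BS m) : (g * h).k = g.k + h.k := rfl

lemma inv_a (g : BS m) : ((g⁻¹).a : ℚ) = -((m : ℚ) ^ (-g.k) * (g.a : ℚ)) := by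
  show ((inv' g).a : ℚ) = _
  simp [inv']

lemma inv_k (g : BS m) : (g⁻¹).k = -g.k := rfl

lemma one_a : (((1 : BS m)).a : ℚ) = 0 := rfl
lemma one_k : ((1 : BS m)).k = 0 := rfl

lemma ext' {g h : BS m} (h1 : (g.a : ℚ) = (h.a : ℚ)) (h2 : g.k = h.k) : g = h :=
  BS.ext (Subtype.ext h1) h2

end BS
namespace BS

variable {m : ℕ} [NeZero m]

lemma letter_cases {w : BS m} (hw : w ∈ bsGen m ∨ w⁻¹ ∈ bsGen m) :
    ((w.a : ℚ) = 1 ∨ (w.a : ℚ) = 0 ∨ (w.a : ℚ) = -1) ∧ (w.k = 1 ∨ w.k = 0 ∨ w.k = -1) := by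
  have inv1 : ((⟨1, 0⟩ : BS m)⁻¹).a = -(1 : ℚ) ∧ ((⟨1, 0⟩ : BS m)⁻¹).k = 0 := by
    constructor
    · rw [inv_a]; norm_num
    · rw [inv_k]; norm_num
  have inv2 : ((⟨0, 1⟩ : BS m)⁻¹).a = (0 : ℚ) ∧ ((⟨0, 1⟩ : BS m)⁻¹).k = -1 := by
    constructor
    · rw [inv_a]; norm_num
    · rw [inv_k]
  rcases hw with hw | hw
  · rcases hw with h | h <;> subst h <;> norm_num
  · rcases hw with h | h
    · have : w = (⟨1, 0⟩ : BS m)⁻¹ := by rw [← h, inv_inv]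
      subst this
      exact ⟨Or.inr (Or.inr inv1.1), Or.inr (Or.inl inv1.2)⟩
    · have : w = (⟨0, 1⟩ : BS m)⁻¹ := by rw [← h, inv_inv]
      subst this
      exact ⟨Or.inr (Or.inl inv2.1), Or.inr (Or.inr inv2.2)⟩

lemma word_bounds (hm : 2 ≤ m) :
    ∀ (l : List (BS m)) (n : ℕ), l.length ≤ n →
    (∀ w ∈ l, w ∈ bsGen m ∨ w⁻¹ ∈ bsGen m) →
    |l.prod.k| ≤ (n : ℤ) ∧ |(l.prod.a : ℚ)| ≤ (n : ℚ) * (m : ℚ) ^ n ∧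
      ∃ z : ℤ, (m : ℚ) ^ n * (l.prod.a : ℚ) = (z : ℚ)
  | [], n, _, _ => by
      refine ⟨?_, ?_, 0, ?_⟩ <;> simp [List.prod_nil, one_a, one_k]
      positivity
  | w :: t, n, hlen, hlet => by
      have hmQ : (2 : ℚ) ≤ (m : ℚ) := by exact_mod_cast hm
      have hm0 : (0 : ℚ) < (m : ℚ) := by linarith
      cases n with
      | zero => simp at hlen
      | succ p =>
        have htlen : t.length ≤ p := by simpa using hlen
        obtain ⟨ih1, ih2, z', hz'⟩ := word_bounds hm t p htlen (fun w hw => hlet w (List.mem_cons_of_mem _ hw))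
        obtain ⟨ha, hk⟩ := letter_cases (hlet w List.mem_cons_self)
        have hprodk : (w :: t).prod.k = w.k + t.prod.k := by rw [List.prod_cons, mul_k]
        have hproda : ((w :: t).prod.a : ℚ) = (w.a : ℚ) + (m : ℚ) ^ w.k * (t.prod.a : ℚ) := by
          rw [List.prod_cons, mul_a]
        have hwk1 : |w.k| ≤ 1 := by rcases hk with h | h | h <;> rw [h] <;> norm_num
        have hwa1 : |(w.a : ℚ)| ≤ 1 := by rcases ha with h | h | h <;> rw [h] <;> norm_num
        have hzp : (m : ℚ) ^ w.k ≤ (m : ℚ) := by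
          rcases hk with h | h | h <;> rw [h]
          · norm_num
          · simpa using by linarith
          · rw [zpow_neg_one]
            have : (m : ℚ)⁻¹ ≤ 1 := by
              rw [inv_le_one_iff₀]; right; linarith
            linarith
        have hzp0 : (0 : ℚ) < (m : ℚ) ^ w.k := zpow_pos hm0 _
        have hpow1 : (1 : ℚ) ≤ (m : ℚ) ^ p := one_le_pow₀ (by linarith)
        refine ⟨?_, ?_, ?_⟩
        · rw [hprodk]
          calc |w.k + t.prod.k| ≤ |w.k| + |t.prod.k| := abs_add_le _ _
            _ ≤ 1 + p := by omega
            _ = ((p + 1 : ℕ) : ℤ) := by push_cast; ring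
        · rw [hproda]
          have h2 : |(m : ℚ) ^ w.k * (t.prod.a : ℚ)| ≤ (m : ℚ) * ((p : ℚ) * (m : ℚ) ^ p) := by
            rw [abs_mul, abs_of_pos hzp0]
            have := abs_nonneg ((t.prod.a : ℚ))
            nlinarith
          calc |(w.a : ℚ) + (m : ℚ) ^ w.k * (t.prod.a : ℚ)|
              ≤ |(w.a : ℚ)| + |(m : ℚ) ^ w.k * (t.prod.a : ℚ)| := abs_add_le _ _
            _ ≤ 1 + (m : ℚ) * ((p : ℚ) * (m : ℚ) ^ p) := by linarith
            _ ≤ ((p + 1 : ℕ) : ℚ) * (m : ℚ) ^ (p + 1) := by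
                push_cast
                rw [pow_succ]
                nlinarith
        · rw [hproda]
          have hza : ∃ za : ℤ, (w.a : ℚ) = (za : ℚ) := by
            rcases ha with h | h | h <;> rw [h]
            exacts [⟨1, by norm_num⟩, ⟨0, by norm_num⟩, ⟨-1, by push_cast; norm_num⟩]
          obtain ⟨za, hza⟩ := hza
          rcases hk with h | h | h <;> rw [h, hza]
          · exact ⟨m ^ (p + 1) * za + m ^ 2 * z', by push_cast; rw [zpow_one]; linear_combination (m : ℚ) ^ 2 * hz'⟩
          · exact ⟨m ^ (p + 1) * za + m * z', by push_cast; rw [zpow_zero]; linear_combination (m : ℚ) * hz'⟩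
          · refine ⟨m ^ (p + 1) * za + z', ?_⟩
            have hmne : (m : ℚ) ≠ 0 := ne_of_gt hm0
            have e : (m : ℚ) ^ (p + 1) * (m : ℚ)⁻¹ = (m : ℚ) ^ p := by
              rw [pow_succ, mul_inv_cancel_right₀ hmne]
            push_cast
            rw [zpow_neg_one]
            linear_combination hz' + (t.prod.a : ℚ) * e

end BS
lemma Zinv_form {m : ℕ} [NeZero m] {q : ℚ} (hq : q ∈ Zinv m) :
    ∃ (s : ℕ) (p : ℤ), q * (m : ℚ) ^ s = (p : ℚ) := by
  have hmne : (m : ℚ) ≠ 0 := Nat.cast_ne_zero.mpr (NeZero.ne m)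
  refine Subring.closure_induction ?_ ?_ ?_ ?_ ?_ ?_ hq
  · rintro x hx
    rw [Set.mem_singleton_iff] at hx
    subst hx
    exact ⟨1, 1, by field_simp; norm_num⟩
  · exact ⟨0, 0, by norm_num⟩
  · exact ⟨0, 1, by norm_num⟩
  · rintro x y _ _ ⟨s1, p1, h1⟩ ⟨s2, p2, h2⟩
    refine ⟨s1 + s2, p1 * m ^ s2 + p2 * m ^ s1, ?_⟩
    push_cast
    rw [pow_add]
    linear_combination (m : ℚ) ^ s2 * h1 + (m : ℚ) ^ s1 * h2
  · rintro x _ ⟨s, p, h⟩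
    exact ⟨s, -p, by push_cast; linear_combination -h⟩
  · rintro x y _ _ ⟨s1, p1, h1⟩ ⟨s2, p2, h2⟩
    refine ⟨s1 + s2, p1 * p2, ?_⟩
    push_cast
    rw [pow_add]
    linear_combination ((m : ℚ) ^ s2 * y) * h1 + (p1 : ℚ) * h2

namespace BS

variable {m : ℕ} [NeZero m]

lemma pow_row (x : BS m) (hx : x.k = 0) (n : ℕ) :
    ((x ^ n).a : ℚ) = n * (x.a : ℚ) ∧ (x ^ n).k = 0 := by
  induction n with
  | zero => simp [one_a, one_k]
  | succ n ih =>
      rw [pow_succ]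
      constructor
      · rw [mul_a, ih.1, ih.2]
        push_cast
        norm_num
        ring
      · rw [mul_k, ih.2, hx]; norm_num

lemma pow_col (x : BS m) (hx : (x.a : ℚ) = 0) (n : ℕ) :
    ((x ^ n).a : ℚ) = 0 ∧ (x ^ n).k = n * x.k := by
  induction n with
  | zero => simp [one_a, one_k]
  | succ n ih =>
      rw [pow_succ]
      constructor
      · rw [mul_a, ih.1, hx]; ring
      · rw [mul_k, ih.2]; push_cast; ring

lemma neg_one_letter : (⟨-1, 0⟩ : BS m) ∈ bsGen m ∨ (⟨-1, 0⟩ : BS m)⁻¹ ∈ bsGen m := by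
  right
  have : (⟨-1, 0⟩ : BS m)⁻¹ = (⟨1, 0⟩ : BS m) := by
    apply ext'
    · rw [inv_a]; push_cast; norm_num
    · rw [inv_k]; simp
  rw [this, bsGen]
  left; rfl

lemma neg_t_letter : (⟨0, -1⟩ : BS m) ∈ bsGen m ∨ (⟨0, -1⟩ : BS m)⁻¹ ∈ bsGen m := by
  right
  have : (⟨0, -1⟩ : BS m)⁻¹ = (⟨0, 1⟩ : BS m) := by
    apply ext'
    · rw [inv_a]; push_cast; norm_num
    · rw [inv_k]; norm_num
  rw [this, bsGen]
  right; rfl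

lemma one_letter : (⟨1, 0⟩ : BS m) ∈ bsGen m ∨ (⟨1, 0⟩ : BS m)⁻¹ ∈ bsGen m :=
  Or.inl (Or.inl rfl)

lemma t_letter : (⟨0, 1⟩ : BS m) ∈ bsGen m ∨ (⟨0, 1⟩ : BS m)⁻¹ ∈ bsGen m :=
  Or.inl (Or.inr rfl)

/-- a word representing (p, 0) -/
lemma row_word (p : ℤ) : ∃ l : List (BS m),
    (∀ w ∈ l, w ∈ bsGen m ∨ w⁻¹ ∈ bsGen m) ∧ ((l.prod.a : ℚ) = p) ∧ l.prod.k = 0 := by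
  by_cases hp : 0 ≤ p
  · refine ⟨List.replicate p.natAbs ⟨1, 0⟩, ?_, ?_, ?_⟩
    · intro w hw
      rw [List.eq_of_mem_replicate hw]
      exact one_letter
    · rw [List.prod_replicate, (pow_row _ rfl _).1]
      have h1 : ((1 : Zinv m) : ℚ) = 1 := rfl
      rw [h1, mul_one]
      push_cast [Nat.cast_natAbs]
      rw [abs_of_nonneg (show (0 : ℚ) ≤ (p : ℚ) by exact_mod_cast hp)]
    · rw [List.prod_replicate]; exact (pow_row _ rfl _).2
  · refine ⟨List.replicate p.natAbs ⟨-1, 0⟩, ?_, ?_, ?_⟩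
    · intro w hw
      rw [List.eq_of_mem_replicate hw]
      exact neg_one_letter
    · rw [List.prod_replicate, (pow_row _ rfl _).1]
      have h1 : (((-1 : Zinv m)) : ℚ) = -1 := by push_cast; norm_num
      rw [h1]
      push_cast [Nat.cast_natAbs]
      rw [abs_of_neg (show (p : ℚ) < 0 by exact_mod_cast (lt_of_not_ge hp))]
      ring
    · rw [List.prod_replicate]; exact (pow_row _ rfl _).2

/-- a word representing (0, e) -/
lemma col_word (e : ℤ) : ∃ l : List (BS m),
    (∀ w ∈ l, w ∈ bsGen m ∨ w⁻¹ ∈ bsGen m) ∧ ((l.prod.a : ℚ) = 0) ∧ l.prod.k = e := by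
  by_cases he : 0 ≤ e
  · refine ⟨List.replicate e.natAbs ⟨0, 1⟩, ?_, ?_, ?_⟩
    · intro w hw; rw [List.eq_of_mem_replicate hw]; exact t_letter
    · rw [List.prod_replicate]
      exact (pow_col _ rfl _).1
    · rw [List.prod_replicate, (pow_col _ rfl _).2]
      simpa using Int.natAbs_of_nonneg he
  · refine ⟨List.replicate e.natAbs ⟨0, -1⟩, ?_, ?_, ?_⟩
    · intro w hw; rw [List.eq_of_mem_replicate hw]; exact neg_t_letter
    · rw [List.prod_replicate]
      exact (pow_col _ rfl _).1
    · rw [List.prod_replicate, (pow_col _ rfl _).2]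
      have h2 : (e.natAbs : ℤ) = -e := Int.ofNat_natAbs_of_nonpos (by omega)
      rw [h2]; ring

lemma exists_word (g : BS m) : ∃ l : List (BS m),
    (∀ w ∈ l, w ∈ bsGen m ∨ w⁻¹ ∈ bsGen m) ∧ l.prod = g := by
  have hmne : (m : ℚ) ≠ 0 := Nat.cast_ne_zero.mpr (NeZero.ne m)
  obtain ⟨s, p, hsp⟩ := Zinv_form g.a.2
  obtain ⟨l1, hl1, ha1, hk1⟩ := col_word (m := m) (-(s : ℤ))
  obtain ⟨l2, hl2, ha2, hk2⟩ := row_word (m := m) p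
  obtain ⟨l3, hl3, ha3, hk3⟩ := col_word (m := m) ((s : ℤ) + g.k)
  refine ⟨l1 ++ l2 ++ l3, ?_, ?_⟩
  · intro w hw
    simp only [List.mem_append] at hw
    rcases hw with (hw | hw) | hw
    exacts [hl1 w hw, hl2 w hw, hl3 w hw]
  · rw [List.prod_append, List.prod_append]
    apply ext'
    · rw [mul_a, mul_a, ha1, ha2, ha3, hk1, mul_k, hk1, hk2]
      have h1 : (m : ℚ) ^ (-(s : ℤ)) = ((m : ℚ) ^ s)⁻¹ := by
        rw [zpow_neg, zpow_natCast]
      rw [h1]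
      field_simp
      linear_combination -hsp
    · rw [mul_k, mul_k, hk1, hk2, hk3]; ring

lemma dist_extract (g h : BS m) (n : ℕ) (hd : wordDist (bsGen m) g h ≤ n) :
    ∃ l : List (BS m), l.length ≤ n ∧ (∀ w ∈ l, w ∈ bsGen m ∨ w⁻¹ ∈ bsGen m) ∧
      g⁻¹ * h = l.prod := by
  have hne : {n : ℕ | ∃ l : List (BS m), l.length = n ∧
      (∀ w ∈ l, w ∈ bsGen m ∨ w⁻¹ ∈ bsGen m) ∧ g⁻¹ * h = l.prod}.Nonempty := by
    obtain ⟨l, hl, hp⟩ := exists_word (g⁻¹ * h)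
    exact ⟨l.length, l, rfl, hl, hp.symm⟩
  have hmem := Nat.sInf_mem hne
  obtain ⟨l, hlen, hlet, hprod⟩ := hmem
  refine ⟨l, ?_, hlet, hprod⟩
  rw [hlen]
  exact hd

end BS
lemma inj_card {α : Type*} {A : Set α} (φ : α → ℤ × ℤ) (hinj : Set.InjOn φ A)
    {T : Finset (ℤ × ℤ)} (him : ∀ γ ∈ A, φ γ ∈ T) :
    A.Finite ∧ A.ncard ≤ T.card := by
  have h1 : φ '' A ⊆ ↑T := by rintro _ ⟨γ, hγ, rfl⟩; exact him γ hγ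
  have hfin : (φ '' A).Finite := T.finite_toSet.subset h1
  have hA : A.Finite := Set.Finite.of_finite_image hfin hinj
  have he : A.ncard = (φ '' A).ncard := (Set.ncard_image_of_injOn hinj).symm
  have h2 : (φ '' A).ncard ≤ T.card := by
    rw [← Set.ncard_coe_finset T]
    exact Set.ncard_le_ncard h1 T.finite_toSet
  exact ⟨hA, he ▸ h2⟩

lemma Icc_card_le {a b : ℤ} {lo hi : ℝ} (h1 : lo ≤ (a : ℝ)) (h2 : (b : ℝ) ≤ hi)
    (h3 : lo ≤ hi) : ((Finset.Icc a b).card : ℝ) ≤ hi - lo + 1 := by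
  rcases le_or_gt a b with h | h
  · rw [Int.card_Icc]
    have hnn : 0 ≤ b + 1 - a := by omega
    have : ((b + 1 - a).toNat : ℝ) = (b : ℝ) + 1 - (a : ℝ) := by
      rw [← Int.cast_natCast, Int.toNat_of_nonneg hnn]; push_cast; ring
    rw [this]; linarith
  · rw [Finset.Icc_eq_empty (by omega)]
    simp; linarith

lemma my_geom_le {M : ℝ} (hM : 2 ≤ M) (t : ℕ) : ∑ i ∈ Finset.range t, M ^ i ≤ M ^ t := by
  induction t with
  | zero => simp
  | succ t ih =>
      rw [Finset.sum_range_succ, pow_succ]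
      have h0 : (0:ℝ) ≤ M ^ t := by positivity
      nlinarith

namespace BS

variable {m : ℕ} [NeZero m]

/-- transport along a short word -/
lemma step_facts (hm : 2 ≤ m) {γ x : BS m} {Nn : ℕ}
    (h : wordDist (bsGen m) γ x ≤ Nn) :
    ∃ (c : ℚ) (dk : ℤ), x.k = γ.k + dk ∧ (x.a : ℚ) = (γ.a : ℚ) + (m : ℚ) ^ γ.k * c ∧
      |dk| ≤ (Nn : ℤ) ∧ |c| ≤ (Nn : ℚ) * (m : ℚ) ^ Nn ∧
      ∃ zc : ℤ, (m : ℚ) ^ Nn * c = (zc : ℚ) := by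
  obtain ⟨l, hlen, hlet, hprod⟩ := dist_extract γ x Nn h
  obtain ⟨hwk, hwa, zw, hzw⟩ := word_bounds hm l Nn hlen hlet
  have hx : x = γ * l.prod := by rw [← hprod]; group
  exact ⟨(l.prod.a : ℚ), l.prod.k, by rw [hx, mul_k], by rw [hx, mul_a], hwk, hwa, zw, hzw⟩

/-- integrality upgrade -/
lemma int_upgrade {c : ℚ} {Nn : ℕ} {zc : ℤ} (hc : (m : ℚ) ^ Nn * c = (zc : ℚ))
    {t : ℤ} (ht : (Nn : ℤ) ≤ t) : ∃ z : ℤ, (m : ℚ) ^ t * c = (z : ℚ) := by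
  have hQM : (m : ℚ) ≠ 0 := Nat.cast_ne_zero.mpr (NeZero.ne m)
  refine ⟨m ^ (t - Nn).toNat * zc, ?_⟩
  have key : (m : ℚ) ^ t = (m : ℚ) ^ ((t - Nn).toNat) * (m : ℚ) ^ Nn := by
    rw [← zpow_natCast (m : ℚ) ((t - Nn).toNat), Int.toNat_of_nonneg (by omega),
      ← zpow_natCast (m : ℚ) Nn, ← zpow_add₀ hQM]
    norm_num
  rw [key, mul_assoc, hc]
  push_cast
  ring

end BS
namespace BS

variable {m : ℕ} [NeZero m]

lemma bdry_struct (hm : 2 ≤ m) {r R : ℝ} (hr : 0 < r) {j N : ℕ}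
    (hN : 0 < N) (hRN : R ≤ (N : ℝ)) (hj : 1 ≤ j) {γ : BS m}
    (hγ : γ ∈ bsBdry m R (bsFolner m r j)) :
    (∃ z : ℤ, (m : ℚ) ^ (2 * N) * (γ.a : ℚ) = (z : ℚ)) ∧
    (-(N : ℤ) ≤ γ.k ∧ γ.k ≤ (j : ℤ) - 1 + N) ∧
    (-((N : ℝ) * (m : ℝ) ^ (γ.k + N)) ≤ ((γ.a : ℚ) : ℝ) ∧
      ((γ.a : ℚ) : ℝ) ≤ r * (m : ℝ) ^ j + (N : ℝ) * (m : ℝ) ^ (γ.k + N)) ∧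
    (γ.k < 3 * N ∨ (j : ℤ) - N ≤ γ.k ∨
      ((γ.a : ℚ) : ℝ) < (N : ℝ) * (m : ℝ) ^ (γ.k + N) ∨
      r * (m : ℝ) ^ j - (N : ℝ) * (m : ℝ) ^ (γ.k + N) ≤ ((γ.a : ℚ) : ℝ)) := by
  have hQM : (m : ℚ) ≠ 0 := Nat.cast_ne_zero.mpr (NeZero.ne m)
  have hM2 : (2 : ℝ) ≤ (m : ℝ) := by exact_mod_cast hm
  have hM0 : (0 : ℝ) < (m : ℝ) := by linarith
  have hMne : (m : ℝ) ≠ 0 := ne_of_gt hM0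
  obtain ⟨⟨x, hxF, hdx⟩, ⟨y, hyF, hdy⟩⟩ := hγ
  have hdx' : wordDist (bsGen m) γ x ≤ N := by
    have : (wordDist (bsGen m) γ x : ℝ) ≤ (N : ℝ) := hdx.trans hRN
    exact_mod_cast this
  have hdy' : wordDist (bsGen m) γ y ≤ N := by
    have : (wordDist (bsGen m) γ y : ℝ) ≤ (N : ℝ) := hdy.trans hRN
    exact_mod_cast this
  obtain ⟨c, dk, hk, ha, hdk, hc, zc, hzc⟩ := step_facts hm hdx'
  obtain ⟨c', dk', hk', ha', hdk', hc', zc', hzc'⟩ := step_facts hm hdy'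
  obtain ⟨⟨zx, hzx⟩, hx0, hxlt, hxk0, hxkj⟩ := hxF
  -- real versions
  have haR : ((x.a : ℚ) : ℝ) = ((γ.a : ℚ) : ℝ) + (m : ℝ) ^ γ.k * ((c : ℚ) : ℝ) := by
    have := congrArg (fun q : ℚ => (q : ℝ)) ha
    push_cast at this
    exact this
  have haR' : ((y.a : ℚ) : ℝ) = ((γ.a : ℚ) : ℝ) + (m : ℝ) ^ γ.k * ((c' : ℚ) : ℝ) := by
    have := congrArg (fun q : ℚ => (q : ℝ)) ha'
    push_cast at this
    exact this
  have hcR : |((c : ℚ) : ℝ)| ≤ (N : ℝ) * (m : ℝ) ^ N := by exact_mod_cast hc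
  have hcR' : |((c' : ℚ) : ℝ)| ≤ (N : ℝ) * (m : ℝ) ^ N := by exact_mod_cast hc'
  have hMk0 : (0 : ℝ) < (m : ℝ) ^ γ.k := zpow_pos hM0 _
  have hMkN : (m : ℝ) ^ γ.k * (m : ℝ) ^ N = (m : ℝ) ^ (γ.k + N) := by
    rw [← zpow_natCast (m : ℝ) N, ← zpow_add₀ hMne]
  have hbd : |(m : ℝ) ^ γ.k * ((c : ℚ) : ℝ)| ≤ (N : ℝ) * (m : ℝ) ^ (γ.k + N) := by
    rw [abs_mul, abs_of_pos hMk0, ← hMkN]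
    calc (m : ℝ) ^ γ.k * |((c : ℚ) : ℝ)| ≤ (m : ℝ) ^ γ.k * ((N : ℝ) * (m : ℝ) ^ N) := by
          exact mul_le_mul_of_nonneg_left hcR (le_of_lt hMk0)
      _ = (N : ℝ) * ((m : ℝ) ^ γ.k * (m : ℝ) ^ N) := by ring
  have hbd' : |(m : ℝ) ^ γ.k * ((c' : ℚ) : ℝ)| ≤ (N : ℝ) * (m : ℝ) ^ (γ.k + N) := by
    rw [abs_mul, abs_of_pos hMk0, ← hMkN]
    calc (m : ℝ) ^ γ.k * |((c' : ℚ) : ℝ)| ≤ (m : ℝ) ^ γ.k * ((N : ℝ) * (m : ℝ) ^ N) := by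
          exact mul_le_mul_of_nonneg_left hcR' (le_of_lt hMk0)
      _ = (N : ℝ) * ((m : ℝ) ^ γ.k * (m : ℝ) ^ N) := by ring
  have habs := abs_le.mp hbd
  have habs' := abs_le.mp hbd'
  have hdkabs := abs_le.mp hdk
  have hdkabs' := abs_le.mp hdk'
  -- (B)
  have hB : -(N : ℤ) ≤ γ.k ∧ γ.k ≤ (j : ℤ) - 1 + N := by
    constructor <;> omega
  -- (A)
  have hA : ∃ z : ℤ, (m : ℚ) ^ (2 * N) * (γ.a : ℚ) = (z : ℚ) := by
    obtain ⟨z1, hz1⟩ := int_upgrade hzc (t := γ.k + 2 * N) (by omega)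
    refine ⟨m ^ (2 * N) * zx - z1, ?_⟩
    have hcast : ((2 * N : ℕ) : ℤ) = 2 * (N : ℤ) := by push_cast; ring
    have key : (m : ℚ) ^ (γ.k + 2 * (N : ℤ)) = (m : ℚ) ^ γ.k * (m : ℚ) ^ (2 * N) := by
      rw [zpow_add₀ hQM, ← hcast, zpow_natCast]
    rw [key] at hz1
    push_cast
    linear_combination (m : ℚ) ^ (2 * N) * hzx - (m : ℚ) ^ (2 * N) * ha - hz1
  -- (C)
  have hC : -((N : ℝ) * (m : ℝ) ^ (γ.k + N)) ≤ ((γ.a : ℚ) : ℝ) ∧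
      ((γ.a : ℚ) : ℝ) ≤ r * (m : ℝ) ^ j + (N : ℝ) * (m : ℝ) ^ (γ.k + N) := by
    constructor
    · linarith [habs.2]
    · linarith [habs.1]
  refine ⟨hA, hB, hC, ?_⟩
  -- (D) by contradiction
  by_contra hD
  push_neg at hD
  obtain ⟨hD1, hD2, hD3, hD4⟩ := hD
  apply hyF
  -- y ∈ F_j
  have hyk : y.k = γ.k + dk' := hk'
  have hγaZ : ∃ z : ℤ, (γ.a : ℚ) = (z : ℚ) := by
    obtain ⟨z1, hz1⟩ := int_upgrade hzc (t := γ.k) (by omega)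
    have key : (m : ℚ) ^ (γ.k : ℤ) * c = (z1 : ℚ) := hz1
    exact ⟨zx - z1, by push_cast; linear_combination hzx - ha - key⟩
  obtain ⟨zg, hzg⟩ := hγaZ
  refine ⟨?_, ?_, ?_, ?_, ?_⟩
  · obtain ⟨z2, hz2⟩ := int_upgrade hzc' (t := γ.k) (by omega)
    exact ⟨zg + z2, by push_cast; linear_combination ha' + hzg + hz2⟩
  · rw [haR']; linarith [habs'.2]
  · rw [haR']; linarith [habs'.1]
  · omega
  · omega

end BS
set_option maxHeartbeats 2000000 in
open Finset in
lemma main_bound {m : ℕ} [NeZero m] (hm : 2 ≤ m) {r R : ℝ} (hr : 0 < r) (hR : 0 < R) :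
    ∃ C : ℝ, 0 < C ∧ ∀ j : ℕ, 1 ≤ j →
      (bsBdry m R (bsFolner m r j)).Finite ∧
      ((bsBdry m R (bsFolner m r j)).ncard : ℝ) ≤ C * (m : ℝ) ^ j := by
  have hQM : (m : ℚ) ≠ 0 := Nat.cast_ne_zero.mpr (NeZero.ne m)
  have hM2 : (2 : ℝ) ≤ (m : ℝ) := by exact_mod_cast hm
  have hM0 : (0 : ℝ) < (m : ℝ) := by linarith
  have hMne : (m : ℝ) ≠ 0 := ne_of_gt hM0
  set N : ℕ := ⌈R⌉₊ with hNdef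
  have hN : 0 < N := Nat.ceil_pos.mpr hR
  have hNR : (0:ℝ) < (N:ℝ) := by exact_mod_cast hN
  have hRN : R ≤ (N : ℝ) := Nat.le_ceil R
  refine ⟨4*N*((m:ℝ)^(2*N)*(m:ℝ)^(2*N)) + (2 + 4*N) + 4*N*r*(m:ℝ)^(2*N) + r*((m:ℝ)^(2*N)*(m:ℝ)^N*(m:ℝ)^(2*N)), by positivity, ?_⟩
  intro j hj
  -- the target finite superset
  set lo1 : ℤ → ℝ := fun k => (-((N:ℝ) * (m:ℝ)^(k + N))) * (m:ℝ)^(2*N) with hlo1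
  set hi1 : ℤ → ℝ := fun k => ((N:ℝ) * (m:ℝ)^(k + N)) * (m:ℝ)^(2*N) with hhi1
  set lo2 : ℤ → ℝ := fun k => (r * (m:ℝ)^j - (N:ℝ) * (m:ℝ)^(k + N)) * (m:ℝ)^(2*N) with hlo2
  set hi2 : ℤ → ℝ := fun k => (r * (m:ℝ)^j + (N:ℝ) * (m:ℝ)^(k + N)) * (m:ℝ)^(2*N) with hhi2
  set slice : ℤ → Finset ℤ := fun k =>
    if 3*(N:ℤ) ≤ k ∧ k ≤ (j:ℤ) - 1 - N then
      Finset.Icc ⌈lo1 k⌉ ⌊hi1 k⌋ ∪ Finset.Icc ⌈lo2 k⌉ ⌊hi2 k⌋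
    else Finset.Icc ⌈lo1 k⌉ ⌊hi2 k⌋ with hslice
  set T : Finset (ℤ × ℤ) := (Finset.range (j + 2*N)).biUnion
      (fun i => (slice ((i:ℤ) - N)).image (fun z => (z, (i:ℤ) - N))) with hT
  set φ : BS m → ℤ × ℤ := fun γ => (⌊(m:ℚ)^(2*N) * (γ.a:ℚ)⌋, γ.k) with hφ
  -- injectivity
  have hinj : Set.InjOn φ (bsBdry m R (bsFolner m r j)) := by
    intro γ hγ γ' hγ' heq
    obtain ⟨⟨z, hz⟩, _, _, _⟩ := BS.bdry_struct hm hr hN hRN hj hγ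
    obtain ⟨⟨z', hz'⟩, _, _, _⟩ := BS.bdry_struct hm hr hN hRN hj hγ'
    have h1 : (⌊(m:ℚ)^(2*N) * (γ.a:ℚ)⌋, γ.k) = (⌊(m:ℚ)^(2*N) * (γ'.a:ℚ)⌋, γ'.k) := heq
    rw [hz, hz', Int.floor_intCast, Int.floor_intCast] at h1
    have h1a := congrArg Prod.fst h1
    have h1k := congrArg Prod.snd h1
    simp only at h1a h1k
    apply BS.ext'
    · have : (m:ℚ)^(2*N) * (γ.a:ℚ) = (m:ℚ)^(2*N) * (γ'.a:ℚ) := by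
        rw [hz, hz']; exact_mod_cast h1a
      exact mul_left_cancel₀ (pow_ne_zero _ hQM) this
    · exact h1k
  -- mapping into T
  have hmap : ∀ γ ∈ bsBdry m R (bsFolner m r j), φ γ ∈ T := by
    intro γ hγ
    obtain ⟨⟨z, hz⟩, ⟨hk1, hk2⟩, ⟨hC1, hC2⟩, hD⟩ := BS.bdry_struct hm hr hN hRN hj hγ
    have hzR : (z : ℝ) = (m:ℝ)^(2*N) * ((γ.a:ℚ):ℝ) := by
      have := congrArg (fun q : ℚ => (q : ℝ)) hz
      push_cast at this
      linarith [this]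
    have hφγ : φ γ = (z, γ.k) := by
      simp only [hφ]
      rw [hz, Int.floor_intCast]
    set i : ℕ := (γ.k + N).toNat with hi
    have hik : (i : ℤ) - N = γ.k := by
      rw [hi, Int.toNat_of_nonneg (by omega)]; ring
    rw [hT]
    apply Finset.mem_biUnion.mpr
    refine ⟨i, Finset.mem_range.mpr (by omega), ?_⟩
    rw [hik, hφγ]
    apply Finset.mem_image.mpr
    refine ⟨z, ?_, rfl⟩
    have hpos : (0:ℝ) < (m:ℝ)^(2*N) := by positivity
    simp only [hslice]
    by_cases hmid : 3*(N:ℤ) ≤ γ.k ∧ γ.k ≤ (j:ℤ) - 1 - N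
    · rw [if_pos hmid]
      rcases hD with hD | hD | hD | hD
      · omega
      · omega
      · apply Finset.mem_union_left
        rw [Finset.mem_Icc]
        constructor
        · apply Int.ceil_le.mpr
          simp only [hlo1]
          have := mul_le_mul_of_nonneg_right hC1 hpos.le
          rw [hzR]; nlinarith
        · apply Int.le_floor.mpr
          simp only [hhi1]
          have := mul_le_mul_of_nonneg_right hD.le hpos.le
          rw [hzR]; nlinarith
      · apply Finset.mem_union_right
        rw [Finset.mem_Icc]
        constructor
        · apply Int.ceil_le.mpr
          simp only [hlo2]
          have := mul_le_mul_of_nonneg_right hD hpos.le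
          rw [hzR]; nlinarith
        · apply Int.le_floor.mpr
          simp only [hhi2]
          have := mul_le_mul_of_nonneg_right hC2 hpos.le
          rw [hzR]; nlinarith
    · rw [if_neg hmid]
      rw [Finset.mem_Icc]
      constructor
      · apply Int.ceil_le.mpr
        simp only [hlo1]
        have := mul_le_mul_of_nonneg_right hC1 hpos.le
        rw [hzR]; nlinarith
      · apply Int.le_floor.mpr
        simp only [hhi2]
        have := mul_le_mul_of_nonneg_right hC2 hpos.le
        rw [hzR]; nlinarith
  obtain ⟨hfin, hcard⟩ := inj_card φ hinj hmap
  refine ⟨hfin, ?_⟩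
  have hcardR : ((bsBdry m R (bsFolner m r j)).ncard : ℝ) ≤ (T.card : ℝ) := by
    exact_mod_cast hcard
  -- now bound T.card
  have hstep1 : (T.card : ℝ) ≤ ∑ i ∈ Finset.range (j + 2*N), ((slice ((i:ℤ) - N)).card : ℝ) := by
    rw [hT]
    calc ((Finset.biUnion _ _).card : ℝ)
        ≤ ((∑ i ∈ Finset.range (j + 2*N), ((slice ((i:ℤ) - N)).image (fun z => (z, (i:ℤ) - N))).card : ℕ) : ℝ) := by
          exact_mod_cast Finset.card_biUnion_le
      _ ≤ _ := by
          push_cast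
          apply Finset.sum_le_sum
          intro i _
          exact_mod_cast Finset.card_image_le
  -- per-slice bound
  have hEi : ∀ i : ℕ, (m:ℝ)^(((i:ℤ) - N) + N) = (m:ℝ)^i := by
    intro i
    rw [show ((i:ℤ) - N + N) = (i:ℤ) by ring, zpow_natCast]
  have hpow2N : (0:ℝ) < (m:ℝ)^(2*N) := by positivity
  have hpowN1 : (1:ℝ) ≤ (m:ℝ)^N := one_le_pow₀ (by linarith)
  have hslicebd : ∀ i ∈ Finset.range (j + 2*N), ((slice ((i:ℤ) - N)).card : ℝ) ≤
      4*N*(m:ℝ)^(2*N)*(m:ℝ)^i + 2 + r*(m:ℝ)^(2*N) * ((if i < 4*N then (m:ℝ)^j else 0) + (m:ℝ)^i * (m:ℝ)^N) := by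
    intro i hir
    have hMi0 : (0:ℝ) < (m:ℝ)^i := by positivity
    have hMj0 : (0:ℝ) < (m:ℝ)^j := by positivity
    set k : ℤ := (i:ℤ) - N with hk
    have hE : (m:ℝ)^(k + N) = (m:ℝ)^i := hEi i
    have hrm : (0:ℝ) ≤ r*(m:ℝ)^(2*N) := by positivity
    have h00 : (0:ℝ) ≤ (N:ℝ)*(m:ℝ)^(2*N)*(m:ℝ)^i := by positivity
    have hY : (0:ℝ) ≤ r*(m:ℝ)^(2*N)*((m:ℝ)^i*(m:ℝ)^N) := by positivity
    have c1 : ((Finset.Icc ⌈lo1 k⌉ ⌊hi1 k⌋).card : ℝ) ≤ 2*N*(m:ℝ)^(2*N)*(m:ℝ)^i + 1 := by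
      have h3 : lo1 k ≤ hi1 k := by
        simp only [hlo1, hhi1]; rw [hE]; nlinarith
      have hcd := Icc_card_le (Int.le_ceil (lo1 k)) (Int.floor_le (hi1 k)) h3
      have heq : hi1 k - lo1 k + 1 = 2*N*(m:ℝ)^(2*N)*(m:ℝ)^i + 1 := by
        simp only [hlo1, hhi1]; rw [hE]; ring
      linarith
    have c2 : ((Finset.Icc ⌈lo2 k⌉ ⌊hi2 k⌋).card : ℝ) ≤ 2*N*(m:ℝ)^(2*N)*(m:ℝ)^i + 1 := by
      have h3 : lo2 k ≤ hi2 k := by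
        simp only [hlo2, hhi2]; rw [hE]; nlinarith
      have hcd := Icc_card_le (Int.le_ceil (lo2 k)) (Int.floor_le (hi2 k)) h3
      have heq : hi2 k - lo2 k + 1 = 2*N*(m:ℝ)^(2*N)*(m:ℝ)^i + 1 := by
        simp only [hlo2, hhi2]; rw [hE]; ring
      linarith
    have c3 : ((Finset.Icc ⌈lo1 k⌉ ⌊hi2 k⌋).card : ℝ) ≤ r*(m:ℝ)^(2*N)*(m:ℝ)^j + 2*N*(m:ℝ)^(2*N)*(m:ℝ)^i + 1 := by
      have h3 : lo1 k ≤ hi2 k := by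
        simp only [hlo1, hhi2]; rw [hE]
        have h1 : (0:ℝ) ≤ r*(m:ℝ)^j*(m:ℝ)^(2*N) := by positivity
        nlinarith
      have hcd := Icc_card_le (Int.le_ceil (lo1 k)) (Int.floor_le (hi2 k)) h3
      have heq : hi2 k - lo1 k + 1 = r*(m:ℝ)^(2*N)*(m:ℝ)^j + 2*N*(m:ℝ)^(2*N)*(m:ℝ)^i + 1 := by
        simp only [hlo1, hhi2]; rw [hE]; ring
      linarith
    simp only [hslice]
    by_cases hmid : 3*(N:ℤ) ≤ k ∧ k ≤ (j:ℤ) - 1 - N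
    · rw [if_pos hmid]
      have hu : ((Finset.Icc ⌈lo1 k⌉ ⌊hi1 k⌋ ∪ Finset.Icc ⌈lo2 k⌉ ⌊hi2 k⌋).card : ℝ)
          ≤ ((Finset.Icc ⌈lo1 k⌉ ⌊hi1 k⌋).card : ℝ) + ((Finset.Icc ⌈lo2 k⌉ ⌊hi2 k⌋).card : ℝ) := by
        exact_mod_cast Finset.card_union_le _ _
      have hite : (0:ℝ) ≤ (if i < 4*N then (m:ℝ)^j else 0) + (m:ℝ)^i * (m:ℝ)^N := by
        split <;> nlinarith
      have hX := mul_nonneg hrm hite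
      linarith
    · rw [if_neg hmid]
      by_cases hi4 : i < 4*N
      · rw [if_pos hi4]
        nlinarith [c3, hY, h00, hrm, hMj0]
      · rw [if_neg hi4]
        -- then k ≥ 3N hence k > j-1-N, so i ≥ j, so (m:ℝ)^j ≤ (m:ℝ)^i
        have hik3 : 3*(N:ℤ) ≤ k := by omega
        have hkj : ¬ (k ≤ (j:ℤ) - 1 - N) := fun h => hmid ⟨hik3, h⟩
        have hji : j ≤ i := by omega
        have hMji : (m:ℝ)^j ≤ (m:ℝ)^i := pow_le_pow_right₀ (by linarith) hji
        have hji2 : (m:ℝ)^j ≤ (m:ℝ)^i*(m:ℝ)^N := by nlinarith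
        have hji3 := mul_le_mul_of_nonneg_left hji2 hrm
        linarith [c3, h00]
  -- sum it up
  have hsum := Finset.sum_le_sum hslicebd
  have hgeom : ∑ i ∈ Finset.range (j + 2*N), (m:ℝ)^i ≤ (m:ℝ)^(j + 2*N) := my_geom_le hM2 _
  have hsplit : ∑ i ∈ Finset.range (j + 2*N),
      (4*N*(m:ℝ)^(2*N)*(m:ℝ)^i + 2 + r*(m:ℝ)^(2*N) * ((if i < 4*N then (m:ℝ)^j else 0) + (m:ℝ)^i * (m:ℝ)^N))
      = (4*N*(m:ℝ)^(2*N))*(∑ i ∈ Finset.range (j + 2*N), (m:ℝ)^i)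
        + (2*((j:ℝ) + 2*N)
        + ((r*(m:ℝ)^(2*N))*(∑ i ∈ Finset.range (j + 2*N), (if i < 4*N then (m:ℝ)^j else 0))
        + (r*(m:ℝ)^(2*N)*(m:ℝ)^N)*(∑ i ∈ Finset.range (j + 2*N), (m:ℝ)^i))) := by
    calc ∑ i ∈ Finset.range (j + 2*N),
        (4*N*(m:ℝ)^(2*N)*(m:ℝ)^i + 2 + r*(m:ℝ)^(2*N) * ((if i < 4*N then (m:ℝ)^j else 0) + (m:ℝ)^i * (m:ℝ)^N))
        = ∑ i ∈ Finset.range (j + 2*N),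
          ((4*N*(m:ℝ)^(2*N))*(m:ℝ)^i + ((2:ℝ) + ((r*(m:ℝ)^(2*N))*(if i < 4*N then (m:ℝ)^j else 0)
            + (r*(m:ℝ)^(2*N)*(m:ℝ)^N)*(m:ℝ)^i))) := Finset.sum_congr rfl (fun i _ => by ring)
      _ = _ := by
          rw [Finset.sum_add_distrib, Finset.sum_add_distrib, Finset.sum_add_distrib,
            ← Finset.mul_sum, ← Finset.mul_sum, ← Finset.mul_sum, Finset.sum_const,
            Finset.card_range, nsmul_eq_mul]
          push_cast
          ring
  have hind : ∑ i ∈ Finset.range (j + 2*N), (if i < 4*N then (m:ℝ)^j else 0) ≤ 4*N*(m:ℝ)^j := by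
    rw [← Finset.sum_filter]
    rw [Finset.sum_const]
    have hsub : (Finset.range (j + 2*N)).filter (fun i => i < 4*N) ⊆ Finset.range (4*N) := by
      intro i hi
      exact Finset.mem_range.mpr (Finset.mem_filter.mp hi).2
    have hcc : ((Finset.range (j + 2*N)).filter (fun i => i < 4*N)).card ≤ 4*N :=
      le_trans (Finset.card_le_card hsub) (by rw [Finset.card_range])
    rw [nsmul_eq_mul]
    have h0 : (0:ℝ) ≤ (m:ℝ)^j := by positivity
    calc (((Finset.range (j + 2*N)).filter (fun i => i < 4*N)).card : ℝ) * (m:ℝ)^j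
        ≤ (4*N : ℝ) * (m:ℝ)^j := by
          apply mul_le_mul_of_nonneg_right _ h0
          exact_mod_cast hcc
      _ = 4*N*(m:ℝ)^j := by ring
  have hjM : (j : ℝ) ≤ (m:ℝ)^j := by
    have h1 : (j : ℝ) < 2^j := by exact_mod_cast (Nat.lt_two_pow_self : j < 2 ^ j)
    have h2 : (2:ℝ)^j ≤ (m:ℝ)^j := pow_le_pow_left₀ (by norm_num) hM2 j
    linarith
  have hMj1 : (1:ℝ) ≤ (m:ℝ)^j := one_le_pow₀ (by linarith)
  have hpowadd : (m:ℝ)^(j + 2*N) = (m:ℝ)^j * (m:ℝ)^(2*N) := pow_add (m:ℝ) j (2*N)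
  have hg := hgeom
  rw [hpowadd] at hg
  have h1 : (0:ℝ) ≤ 4*N*(m:ℝ)^(2*N) := by positivity
  have h2 : (0:ℝ) ≤ r*(m:ℝ)^(2*N) := by positivity
  have h3 : (0:ℝ) ≤ r*(m:ℝ)^(2*N)*(m:ℝ)^N := by positivity
  have hjN : 2*((j:ℝ) + 2*N) ≤ 2*(m:ℝ)^j + 4*N*(m:ℝ)^j := by nlinarith [hjM, hMj1, hNR]
  calc ((bsBdry m R (bsFolner m r j)).ncard : ℝ)
      ≤ (T.card : ℝ) := hcardR
    _ ≤ ∑ i ∈ Finset.range (j + 2*N), ((slice ((i:ℤ) - N)).card : ℝ) := hstep1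
    _ ≤ ∑ i ∈ Finset.range (j + 2*N),
        (4*N*(m:ℝ)^(2*N)*(m:ℝ)^i + 2 + r*(m:ℝ)^(2*N) * ((if i < 4*N then (m:ℝ)^j else 0) + (m:ℝ)^i * (m:ℝ)^N)) := hsum
    _ = _ := hsplit
    _ ≤ (4*N*(m:ℝ)^(2*N))*((m:ℝ)^j*(m:ℝ)^(2*N)) + (2*(m:ℝ)^j + 4*N*(m:ℝ)^j
        + ((r*(m:ℝ)^(2*N))*(4*N*(m:ℝ)^j) + (r*(m:ℝ)^(2*N)*(m:ℝ)^N)*((m:ℝ)^j*(m:ℝ)^(2*N)))) := by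
        have e1 := mul_le_mul_of_nonneg_left hg h1
        have e2 := mul_le_mul_of_nonneg_left hg h3
        have e3 := mul_le_mul_of_nonneg_left hind h2
        linarith
    _ = (4*N*((m:ℝ)^(2*N)*(m:ℝ)^(2*N)) + (2 + 4*N) + 4*N*r*(m:ℝ)^(2*N) + r*((m:ℝ)^(2*N)*(m:ℝ)^N*(m:ℝ)^(2*N))) * (m:ℝ)^j := by
        ring
lemma folner_facts {m : ℕ} [NeZero m] (hm : 2 ≤ m) {r : ℝ} (hr : 0 < r)
    (j : ℕ) (hj : 1 ≤ j) :
    (bsFolner m r j).Finite ∧ r * (m:ℝ)^j * (j:ℝ) ≤ ((bsFolner m r j).ncard : ℝ) := by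
  have hM0 : (0:ℝ) < (m:ℝ) := by
    have : (2:ℝ) ≤ (m:ℝ) := by exact_mod_cast hm
    linarith
  -- finiteness
  have hfin : (bsFolner m r j).Finite := by
    have := inj_card (fun γ : BS m => (⌊(γ.a:ℚ)⌋, γ.k))
      (A := bsFolner m r j) ?_ (T := Finset.Icc (0:ℤ) ⌈r * (m:ℝ)^j⌉ ×ˢ Finset.Icc (0:ℤ) (j:ℤ)) ?_
    · exact this.1
    · intro γ hγ γ' hγ' he
      obtain ⟨⟨z, hz⟩, _, _, _, _⟩ := hγ
      obtain ⟨⟨z', hz'⟩, _, _, _, _⟩ := hγ'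
      have h1 := congrArg Prod.fst he
      have h2 := congrArg Prod.snd he
      simp only at h1 h2
      rw [hz, hz', Int.floor_intCast, Int.floor_intCast] at h1
      apply BS.ext' _ h2
      rw [hz, hz', h1]
    · intro γ hγ
      obtain ⟨⟨z, hz⟩, h0, hlt, hk0, hkj⟩ := hγ
      have hzR : ((γ.a:ℚ):ℝ) = (z:ℝ) := by exact_mod_cast congrArg (fun q:ℚ => ((q:ℝ))) hz
      show (⌊(γ.a:ℚ)⌋, γ.k) ∈ Finset.Icc (0:ℤ) ⌈r * (m:ℝ)^j⌉ ×ˢ Finset.Icc (0:ℤ) (j:ℤ)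
      apply Finset.mem_product.mpr
      constructor
      · rw [hz, Int.floor_intCast]
        apply Finset.mem_Icc.mpr
        constructor
        · exact_mod_cast hzR ▸ h0
        · have : (z:ℝ) ≤ ⌈r * (m:ℝ)^j⌉ := le_trans (by rw [← hzR]; linarith) (Int.le_ceil _)
          exact_mod_cast this
      · exact Finset.mem_Icc.mpr ⟨hk0, by omega⟩
  refine ⟨hfin, ?_⟩
  -- lower bound via explicit grid
  set n : ℕ := ⌈r * (m:ℝ)^j⌉₊ with hn
  have hψmem : ∀ q : ℕ, ((q:ℚ)) ∈ Zinv m := fun q => natCast_mem (Zinv m) q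
  set ψ : ℕ × ℕ → BS m := fun q => ⟨⟨(q.1:ℚ), hψmem q.1⟩, (q.2:ℤ)⟩ with hψ
  set S : Finset (ℕ × ℕ) := Finset.range n ×ˢ Finset.range j with hS
  have hinj : Set.InjOn ψ ↑S := by
    intro q _ q' _ he
    have h1 : ((q.1:ℚ)) = ((q'.1:ℚ)) := congrArg (fun g : BS m => ((g.a:ℚ))) he
    have h2 : ((q.2:ℤ)) = ((q'.2:ℤ)) := congrArg (fun g : BS m => g.k) he
    have e1 : q.1 = q'.1 := by exact_mod_cast h1
    have e2 : q.2 = q'.2 := by exact_mod_cast h2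
    exact Prod.ext e1 e2
  have hsub : ψ '' ↑S ⊆ bsFolner m r j := by
    rintro _ ⟨q, hq, rfl⟩
    rw [Finset.mem_coe, hS, Finset.mem_product, Finset.mem_range, Finset.mem_range] at hq
    have hψa : (((ψ q).a : ℚ)) = (q.1:ℚ) := rfl
    have hψk : (ψ q).k = (q.2:ℤ) := rfl
    refine ⟨⟨(q.1:ℤ), by rw [hψa]; norm_cast⟩, by rw [hψa]; positivity, ?_,
      by rw [hψk]; positivity, by rw [hψk]; exact_mod_cast hq.2⟩
    have h1 : ((q.1:ℝ)) < r * (m:ℝ)^j := Nat.lt_ceil.mp hq.1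
    rw [hψa]
    exact_mod_cast h1
  have hcard : (ψ '' ↑S).ncard = n * j := by
    rw [Set.ncard_image_of_injOn hinj, Set.ncard_coe_finset, hS, Finset.card_product,
      Finset.card_range, Finset.card_range]
  have hle : (ψ '' ↑S).ncard ≤ (bsFolner m r j).ncard := Set.ncard_le_ncard hsub hfin
  have hnj : ((n * j : ℕ) : ℝ) ≤ ((bsFolner m r j).ncard : ℝ) := by
    exact_mod_cast hcard ▸ hle
  have hnr : r * (m:ℝ)^j ≤ (n:ℝ) := Nat.le_ceil _
  have hj0 : (0:ℝ) ≤ (j:ℝ) := Nat.cast_nonneg j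
  calc r * (m:ℝ)^j * (j:ℝ) ≤ (n:ℝ) * (j:ℝ) := mul_le_mul_of_nonneg_right hnr hj0
    _ = ((n * j : ℕ) : ℝ) := by push_cast; ring
    _ ≤ _ := hnj
/-- The boundary of the Følner set F_j has at most C·m^j elements, so the F_j form a
Følner sequence in Γ_m. -/
theorem bs_folner_boundary_estimate (m : ℕ) [NeZero m] (hm : 2 ≤ m)
    (r : ℝ) (hr : 0 < r) (R : ℝ) (hR : 0 < R) :
    ∃ C : ℝ, 0 < C ∧
      (∀ j : ℕ, 1 ≤ j →
        ((bsBdry m R (bsFolner m r j)).ncard : ℝ) ≤ C * (m : ℝ) ^ j) ∧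
      Filter.Tendsto
        (fun j : ℕ => ((bsBdry m R (bsFolner m r j)).ncard : ℝ) /
          ((bsFolner m r j).ncard : ℝ))
        Filter.atTop (nhds 0) := by
  obtain ⟨C, hC, hmain⟩ := main_bound hm hr hR
  have hM0 : (0:ℝ) < (m:ℝ) := by
    have : (2:ℝ) ≤ (m:ℝ) := by exact_mod_cast hm
    linarith
  refine ⟨C, hC, fun j hj => (hmain j hj).2, ?_⟩
  have htend : Filter.Tendsto (fun j : ℕ => (C/r) * (1/(j:ℝ))) Filter.atTop (nhds 0) := by
    have := (tendsto_one_div_atTop_nhds_zero_nat).const_mul (C/r)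
    simpa using this
  refine squeeze_zero' ?_ ?_ htend
  · filter_upwards with j
    exact div_nonneg (Nat.cast_nonneg _) (Nat.cast_nonneg _)
  · filter_upwards [Filter.eventually_ge_atTop 1] with j hj
    obtain ⟨hfinF, hlow⟩ := folner_facts hm hr j hj
    have hb := (hmain j hj).2
    have hj0 : (0:ℝ) < (j:ℝ) := by exact_mod_cast hj
    have hden : (0:ℝ) < r * (m:ℝ)^j * (j:ℝ) := by positivity
    have hFpos : (0:ℝ) < ((bsFolner m r j).ncard : ℝ) := lt_of_lt_of_le hden hlow
    calc ((bsBdry m R (bsFolner m r j)).ncard : ℝ) / ((bsFolner m r j).ncard : ℝ)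
        ≤ (C * (m:ℝ)^j) / (r * (m:ℝ)^j * (j:ℝ)) := by
          apply div_le_div₀ (by positivity) hb hden hlow
      _ = (C/r) * (1/(j:ℝ)) := by
          field_simp
end
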